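/- arXiv:2506.07382 — 3 statements merged into one kernel-verified Lean document; each statement's English description precedes it below -/
import Mathlib

section
/- Let 0 < α ≤ s and f ≥ 0 be μ-measurable. For any basic cube I of K, ∫_I f dμ ≤ (s/α) ( ∫_I f^{α/s} dH^α_μ )^{s/α}. -/
open MeasureTheory Set Filter
open scoped ENNReal NNReal Topology

noncomputable section

abbrev Pt (d : ℕ) := EuclideanSpace ℝ (Fin d)

/-- An iterated function system of contractive similitudes on ℝ^d with attractor `K`
satisfying the strong separation condition. -/
structure IFS (d m : ℕ) where
  S : Fin m → Pt d → Pt d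
  r : Fin m → ℝ
  r_pos : ∀ i, 0 < r i
  r_lt_one : ∀ i, r i < 1
  similitude : ∀ i x y, dist (S i x) (S i y) = r i * dist x y
  K : Set (Pt d)
  K_nonempty : K.Nonempty
  K_compact : IsCompact K
  K_invariant : K = ⋃ i, S i '' K
  ssc : Pairwise fun i j => Disjoint (S i '' K) (S j '' K)

namespace IFS

variable {d m : ℕ}

/-- The composition `S_{i₁} ∘ ⋯ ∘ S_{iₙ}` for the word `w = i₁ ⋯ iₙ`. -/
def cylMap (Φ : IFS d m) (w : List (Fin m)) : Pt d → Pt d :=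
  w.foldr (fun i g => Φ.S i ∘ g) id

/-- The basic cube (cylinder set) `K_w = S_{i₁} ∘ ⋯ ∘ S_{iₙ}(K)`. -/
def cyl (Φ : IFS d m) (w : List (Fin m)) : Set (Pt d) :=
  Φ.cylMap w '' Φ.K

/-- `μ` is the self-similar probability measure associated with the probability
vector `p` (with all `p i > 0`), i.e. `μ = ∑ i, p i • μ ∘ S i ⁻¹`, supported on `K`. -/
def SelfSimilar (Φ : IFS d m) (p : Fin m → ℝ≥0∞) (μ : Measure (Pt d)) : Prop :=
  (∑ i, p i = 1) ∧ (∀ i, 0 < p i) ∧ IsProbabilityMeasure μ ∧ μ Φ.K = 1 ∧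
    μ = ∑ i, p i • μ.map (Φ.S i)

/-- The α-dimensional Hausdorff content on `K` associated with `μ`, defined via
coverings by countable families of basic cubes; `s` is the Hausdorff dimension of `K`. -/
def hContent (Φ : IFS d m) (μ : Measure (Pt d)) (s α : ℝ) (E : Set (Pt d)) : ℝ≥0∞ :=
  ⨅ (C : Set (List (Fin m))) (_ : C.Countable) (_ : E ⊆ ⋃ w ∈ C, Φ.cyl w),
    ∑' w : C, μ (Φ.cyl w.1) ^ (α / s)

/-- The dyadic-type Hardy–Littlewood maximal operator over basic cubes containing `x`. -/
def maxOp (Φ : IFS d m) (μ : Measure (Pt d)) (f : Pt d → ℝ) (x : Pt d) : ℝ≥0∞ :=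
  ⨆ (w : List (Fin m)) (_ : x ∈ Φ.cyl w),
    (μ (Φ.cyl w))⁻¹ * ∫⁻ y in Φ.cyl w, ENNReal.ofReal |f y| ∂μ

end IFS

/-- The Choquet integral of `g` over `E` with respect to the monotone set function `ν`. -/
def choquetInt {X : Type*} (ν : Set X → ℝ≥0∞) (E : Set X) (g : X → ℝ≥0∞) : ℝ≥0∞ :=
  ∫⁻ t in Set.Ioi (0 : ℝ), ν {x ∈ E | ENNReal.ofReal t < g x}

/-- `log⁺ t = max (0, log t)`. -/
def posLog (t : ℝ) : ℝ := max 0 (Real.log t)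

section AuxLemmas

/-- Finite subadditivity of `x ↦ x ^ θ` for `0 < θ ≤ 1` on `ℝ≥0∞`. -/
lemma aux_rpow_finsum_le {ι : Type*} (a : ι → ℝ≥0∞) {θ : ℝ} (hθ0 : 0 < θ) (hθ1 : θ ≤ 1)
    (F : Finset ι) : (∑ i ∈ F, a i) ^ θ ≤ ∑ i ∈ F, a i ^ θ := by
  classical
  induction F using Finset.cons_induction with
  | empty => simp [ENNReal.zero_rpow_of_pos hθ0]
  | cons i F hi ih =>
    rw [Finset.sum_cons, Finset.sum_cons]
    exact (ENNReal.rpow_add_le_add_rpow _ _ hθ0.le hθ1).trans (by gcongr)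

/-- `∑' a ≤ (∑' a^θ)^(1/θ)` for `0 < θ ≤ 1` on `ℝ≥0∞`. -/
lemma aux_tsum_le_rpow_tsum {ι : Type*} (a : ι → ℝ≥0∞) {θ : ℝ} (hθ0 : 0 < θ) (hθ1 : θ ≤ 1) :
    ∑' i, a i ≤ (∑' i, a i ^ θ) ^ θ⁻¹ := by
  rw [ENNReal.tsum_eq_iSup_sum]
  refine iSup_le fun F => ?_
  have h1 : (∑ i ∈ F, a i) ^ θ ≤ ∑' i, a i ^ θ :=
    (aux_rpow_finsum_le a hθ0 hθ1 F).trans (ENNReal.sum_le_tsum F)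
  have h2 := ENNReal.rpow_le_rpow h1 (inv_nonneg.mpr hθ0.le)
  rwa [← ENNReal.rpow_mul, mul_inv_cancel₀ hθ0.ne', ENNReal.rpow_one] at h2

/-- Layer-cake inequality for `ℝ≥0∞`-valued functions. -/
lemma aux_lintegral_le_meas_lt {X : Type*} [MeasurableSpace X] (ν : Measure X)
    (f : X → ℝ≥0∞) (hf : Measurable f) :
    ∫⁻ x, f x ∂ν ≤ ∫⁻ t in Set.Ioi (0 : ℝ), ν {x | ENNReal.ofReal t < f x} := by
  have hmain : ∀ n : ℕ, ∫⁻ x, min (f x) n ∂ν ≤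
      ∫⁻ t in Set.Ioi (0 : ℝ), ν {x | ENNReal.ofReal t < f x} := by
    intro n
    have hne : ∀ x, min (f x) n ≠ ∞ :=
      fun x => ((min_le_right _ _).trans_lt (ENNReal.natCast_lt_top n)).ne
    have hmeas : Measurable fun x => (min (f x) (n : ℝ≥0∞)).toReal :=
      (hf.min measurable_const).ennreal_toReal
    have hnn : 0 ≤ᵐ[ν] fun x => (min (f x) (n : ℝ≥0∞)).toReal :=
      Filter.Eventually.of_forall fun x => ENNReal.toReal_nonneg
    have key := lintegral_eq_lintegral_meas_lt ν hnn hmeas.aemeasurable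
    calc ∫⁻ x, min (f x) n ∂ν
        = ∫⁻ x, ENNReal.ofReal ((min (f x) (n : ℝ≥0∞)).toReal) ∂ν := by
          refine lintegral_congr fun x => ?_
          rw [ENNReal.ofReal_toReal (hne x)]
      _ = ∫⁻ t in Set.Ioi (0 : ℝ), ν {a | t < (min (f a) (n : ℝ≥0∞)).toReal} := key
      _ ≤ ∫⁻ t in Set.Ioi (0 : ℝ), ν {x | ENNReal.ofReal t < f x} := by
          refine setLIntegral_mono' measurableSet_Ioi fun t ht => measure_mono fun a ha => ?_
          have h1 : ENNReal.ofReal t < min (f a) n :=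
            (ENNReal.ofReal_lt_iff_lt_toReal (le_of_lt ht) (hne a)).mpr ha
          exact h1.trans_le (min_le_left _ _)
  have hfx : ∀ x, f x = ⨆ n : ℕ, min (f x) n := by
    intro x
    refine le_antisymm ?_ (iSup_le fun n => min_le_left _ _)
    rcases eq_or_ne (f x) ∞ with hx | hx
    · have : (⨆ n : ℕ, min (f x) (n : ℝ≥0∞)) = ⨆ n : ℕ, (n : ℝ≥0∞) := by
        refine iSup_congr fun n => ?_
        rw [hx]; exact min_eq_right le_top
      rw [this, ENNReal.iSup_natCast, hx]
    · obtain ⟨n, hn⟩ := ENNReal.exists_nat_gt hx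
      exact le_iSup_of_le n (le_of_eq (min_eq_left hn.le).symm)
  calc ∫⁻ x, f x ∂ν = ∫⁻ x, ⨆ n : ℕ, min (f x) n ∂ν := lintegral_congr hfx
    _ = ⨆ n : ℕ, ∫⁻ x, min (f x) n ∂ν :=
        lintegral_iSup (fun n => hf.min measurable_const)
          (fun i j hij x => min_le_min le_rfl (by exact_mod_cast Nat.cast_le.mpr hij))
    _ ≤ _ := iSup_le hmain

/-- Substitution `u = t ^ θ` for lower integrals over `Ioi 0`. -/
lemma aux_lintegral_rpow_subst {θ : ℝ} (hθ : 0 < θ) (F : ℝ → ℝ≥0∞) :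
    ∫⁻ t in Set.Ioi (0 : ℝ), ENNReal.ofReal (θ * t ^ (θ - 1)) * F (t ^ θ)
      = ∫⁻ u in Set.Ioi (0 : ℝ), F u := by
  have a1 : ∀ x ∈ Set.Ioi (0 : ℝ), HasFDerivWithinAt (fun t : ℝ => t ^ θ)
      (ContinuousLinearMap.toSpanSingleton ℝ (θ * x ^ (θ - 1))) (Set.Ioi 0) x := by
    intro x hx
    have := (Real.hasDerivAt_rpow_const (p := θ) (Or.inl (ne_of_gt hx))).hasDerivWithinAt
      (s := Set.Ioi (0 : ℝ))
    simpa [mul_comm] using this.hasFDerivWithinAt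
  have a2 : Set.InjOn (fun t : ℝ => t ^ θ) (Set.Ioi 0) := by
    intro x hx y hy hxy
    exact Real.rpow_left_injOn hθ.ne' (show (0:ℝ) ≤ x from le_of_lt hx) (show (0:ℝ) ≤ y from le_of_lt hy) hxy
  have a3 : (fun t : ℝ => t ^ θ) '' Set.Ioi 0 = Set.Ioi 0 := by
    ext x
    constructor
    · rintro ⟨y, hy, rfl⟩; exact Real.rpow_pos_of_pos hy θ
    · intro hx
      exact ⟨x ^ (1 / θ), Real.rpow_pos_of_pos hx _, by
        show (x ^ (1 / θ)) ^ θ = x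
        rw [← Real.rpow_mul (le_of_lt hx), one_div_mul_cancel hθ.ne', Real.rpow_one]⟩
  have key := lintegral_image_eq_lintegral_abs_det_fderiv_mul volume measurableSet_Ioi a1 a2 F
  rw [a3] at key
  rw [key]
  refine setLIntegral_congr_fun measurableSet_Ioi (fun x hx => ?_)
  rw [ContinuousLinearMap.det_toSpanSingleton, abs_of_nonneg (mul_nonneg hθ.le (Real.rpow_nonneg (le_of_lt hx) _))]

end AuxLemmas

/-- For any basic cube `I`, `∫_I f dμ ≤ (s/α) (∫_I f^{α/s} dH^α_μ)^{s/α}`. -/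
theorem integral_le_choquet (d m : ℕ) (Φ : IFS d m) (p : Fin m → ℝ≥0∞)
    (μ : Measure (Pt d)) (hμ : Φ.SelfSimilar p μ)
    (s : ℝ) (hs : 0 < s) (hdim : ∑ i, Φ.r i ^ s = 1)
    (α : ℝ) (hα : 0 < α) (hαs : α ≤ s)
    (f : Pt d → ℝ≥0∞) (hf : Measurable f) (I : List (Fin m)) :
    ∫⁻ x in Φ.cyl I, f x ∂μ ≤
      ENNReal.ofReal (s / α) *
        (choquetInt (Φ.hContent μ s α) (Φ.cyl I) fun x => f x ^ (α / s)) ^ (s / α) := by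
  classical
  obtain ⟨hp_sum, hp_pos, hprob, hK, hself⟩ := hμ
  haveI := hprob
  set θ : ℝ := α / s with hθdef
  have hθ0 : 0 < θ := div_pos hα hs
  have hθ1 : θ ≤ 1 := (div_le_one hs).mpr hαs
  have hσ : s / α = θ⁻¹ := by rw [hθdef, inv_div]
  have hσ1 : 1 ≤ θ⁻¹ := by
    nth_rewrite 1 [← mul_inv_cancel₀ hθ0.ne']
    exact mul_le_of_le_one_left (inv_nonneg.mpr hθ0.le) hθ1
  have hexp : 0 ≤ θ⁻¹ - 1 := by linarith
  set H : Set (Pt d) → ℝ≥0∞ := Φ.hContent μ s α with hHdef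
  set g : Pt d → ℝ≥0∞ := fun x => f x ^ θ with hgdef
  set A : ℝ≥0∞ := choquetInt H (Φ.cyl I) g with hAdef
  set h : ℝ → ℝ≥0∞ := fun u => H {x ∈ Φ.cyl I | ENNReal.ofReal u < g x} with hhdef
  have hA : A = ∫⁻ t in Set.Ioi (0 : ℝ), h t := rfl
  rw [hσ]
  rcases eq_or_ne A ⊤ with hAtop | hAne
  · rw [hAtop, ENNReal.top_rpow_of_pos (by positivity), ENNReal.mul_top]
    · exact le_top
    · exact (ENNReal.ofReal_pos.mpr (by positivity)).ne'
  -- basic properties of the content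
  have Hmono : ∀ {E F : Set (Pt d)}, E ⊆ F → H E ≤ H F := by
    intro E F hEF
    refine le_iInf fun C => le_iInf fun hC => le_iInf fun hcov => ?_
    exact iInf_le_of_le C (iInf_le_of_le hC (iInf_le_of_le (hEF.trans hcov) le_rfl))
  have meas_le_H : ∀ E : Set (Pt d), μ E ≤ H E ^ θ⁻¹ := by
    intro E
    have h1 : μ E ^ θ ≤ H E := by
      refine le_iInf fun C => le_iInf fun hC => le_iInf fun hcov => ?_
      have h2 : μ E ≤ ∑' w : C, μ (Φ.cyl w.1) :=
        (measure_mono hcov).trans (measure_biUnion_le μ hC _)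
      have h3 := h2.trans (aux_tsum_le_rpow_tsum (fun w : C => μ (Φ.cyl w.1)) hθ0 hθ1)
      have h4 := ENNReal.rpow_le_rpow h3 hθ0.le
      rwa [← ENNReal.rpow_mul, inv_mul_cancel₀ hθ0.ne', ENNReal.rpow_one] at h4
    have h5 := ENNReal.rpow_le_rpow h1 (inv_nonneg.mpr hθ0.le)
    rwa [← ENNReal.rpow_mul, mul_inv_cancel₀ hθ0.ne', ENNReal.rpow_one] at h5
  have h_le_one : ∀ u : ℝ, h u ≤ 1 := by
    intro u
    have hcov : {x ∈ Φ.cyl I | ENNReal.ofReal u < g x} ⊆ ⋃ w ∈ ({I} : Set (List (Fin m))), Φ.cyl w := by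
      simp only [Set.mem_singleton_iff, Set.iUnion_iUnion_eq_left]
      exact Set.sep_subset _ _
    have h1 : h u ≤ ∑' w : ({I} : Set (List (Fin m))), μ (Φ.cyl w.1) ^ θ :=
      iInf_le_of_le {I} (iInf_le_of_le (Set.countable_singleton I) (iInf_le_of_le hcov le_rfl))
    calc h u ≤ ∑' w : ({I} : Set (List (Fin m))), μ (Φ.cyl w.1) ^ θ := h1
      _ = μ (Φ.cyl I) ^ θ := tsum_singleton I (fun w => μ (Φ.cyl w) ^ θ)
      _ ≤ 1 ^ θ := by gcongr; exact prob_le_one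
      _ = 1 := ENNReal.one_rpow θ
  have h_anti : Antitone h := by
    intro u v huv
    exact Hmono fun x hx => ⟨hx.1, (ENNReal.ofReal_le_ofReal huv).trans_lt hx.2⟩
  have key3 : ∀ u : ℝ, ENNReal.ofReal u * h u ≤ A := by
    intro u
    rcases le_or_gt u 0 with hu | hu
    · simp [ENNReal.ofReal_eq_zero.mpr hu]
    · calc ENNReal.ofReal u * h u = ∫⁻ _ in Set.Ioc (0 : ℝ) u, h u := by
            rw [setLIntegral_const, Real.volume_Ioc, sub_zero, mul_comm]
        _ ≤ ∫⁻ t in Set.Ioc (0 : ℝ) u, h t :=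
            setLIntegral_mono' measurableSet_Ioc fun t ht => h_anti ht.2
        _ ≤ ∫⁻ t in Set.Ioi (0 : ℝ), h t := lintegral_mono_set Set.Ioc_subset_Ioi_self
        _ = A := hA.symm
  -- pointwise bound on tail measures
  have key2 : ∀ t : ℝ, 0 < t →
      μ ({x | ENNReal.ofReal t < f x} ∩ Φ.cyl I)
        ≤ A ^ (θ⁻¹ - 1) * (ENNReal.ofReal (t ^ (θ - 1)) * h (t ^ θ)) := by
    intro t ht
    have hset : {x | ENNReal.ofReal t < f x} ∩ Φ.cyl I
        = {x ∈ Φ.cyl I | ENNReal.ofReal (t ^ θ) < g x} := by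
      ext x
      simp only [Set.mem_inter_iff, Set.mem_setOf_eq, Set.mem_sep_iff, hgdef]
      rw [← ENNReal.ofReal_rpow_of_pos ht, ENNReal.rpow_lt_rpow_iff hθ0, and_comm]
    have hbH : μ ({x | ENNReal.ofReal t < f x} ∩ Φ.cyl I) ≤ h (t ^ θ) ^ θ⁻¹ := by
      rw [hset]; exact meas_le_H _
    refine hbH.trans ?_
    set b : ℝ≥0∞ := h (t ^ θ) with hbdef
    rcases eq_or_ne b 0 with hb0 | hb0
    · rw [hb0, ENNReal.zero_rpow_of_pos (by positivity)]; positivity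
    have hbtop : b ≠ ⊤ := ((h_le_one _).trans_lt ENNReal.one_lt_top).ne
    have htθ : (0 : ℝ) < t ^ θ := Real.rpow_pos_of_pos ht θ
    have hne0 : ENNReal.ofReal (t ^ θ) ≠ 0 := (ENNReal.ofReal_pos.mpr htθ).ne'
    have hbb : b ≤ A * (ENNReal.ofReal (t ^ θ))⁻¹ := by
      have h3 := key3 (t ^ θ)
      rw [mul_comm] at h3
      rw [← div_eq_mul_inv]
      exact (ENNReal.le_div_iff_mul_le (Or.inl hne0) (Or.inl ENNReal.ofReal_ne_top)).mpr h3
    have hsplit : b ^ θ⁻¹ = b * b ^ (θ⁻¹ - 1) := by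
      calc b ^ θ⁻¹ = b ^ (1 + (θ⁻¹ - 1)) := by congr 1; ring
        _ = b * b ^ (θ⁻¹ - 1) := by rw [ENNReal.rpow_add _ _ hb0 hbtop, ENNReal.rpow_one]
    have hpow : ((ENNReal.ofReal (t ^ θ))⁻¹) ^ (θ⁻¹ - 1) = ENNReal.ofReal (t ^ (θ - 1)) := by
      rw [ENNReal.inv_rpow, ← ENNReal.ofReal_rpow_of_pos ht, ← ENNReal.rpow_mul,
        ← ENNReal.rpow_neg, ← ENNReal.ofReal_rpow_of_pos ht]
      congr 1
      field_simp
      ring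
    calc b ^ θ⁻¹ = b * b ^ (θ⁻¹ - 1) := hsplit
      _ ≤ b * (A * (ENNReal.ofReal (t ^ θ))⁻¹) ^ (θ⁻¹ - 1) := by
          gcongr
      _ = A ^ (θ⁻¹ - 1) * (ENNReal.ofReal (t ^ (θ - 1)) * b) := by
          rw [ENNReal.mul_rpow_of_nonneg _ _ hexp, hpow]; ring
  -- substitution
  have subst : ∫⁻ t in Set.Ioi (0 : ℝ), ENNReal.ofReal (t ^ (θ - 1)) * h (t ^ θ)
      = ENNReal.ofReal θ⁻¹ * A := by
    have h1 : ∫⁻ t in Set.Ioi (0 : ℝ), ENNReal.ofReal (θ * t ^ (θ - 1)) * h (t ^ θ) = A :=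
      (aux_lintegral_rpow_subst hθ0 h).trans hA.symm
    have h2 : ∫⁻ t in Set.Ioi (0 : ℝ), ENNReal.ofReal (θ * t ^ (θ - 1)) * h (t ^ θ)
        = ENNReal.ofReal θ * ∫⁻ t in Set.Ioi (0 : ℝ), ENNReal.ofReal (t ^ (θ - 1)) * h (t ^ θ) := by
      rw [← lintegral_const_mul' _ _ ENNReal.ofReal_ne_top]
      refine lintegral_congr fun t => ?_
      rw [ENNReal.ofReal_mul hθ0.le, mul_assoc]
    have h3 := h2.symm.trans h1
    have hne0 : ENNReal.ofReal θ ≠ 0 := (ENNReal.ofReal_pos.mpr hθ0).ne'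
    have := congrArg (fun z => (ENNReal.ofReal θ)⁻¹ * z) h3
    simp only [← mul_assoc, ENNReal.inv_mul_cancel hne0 ENNReal.ofReal_ne_top, one_mul] at this
    rw [this, ENNReal.ofReal_inv_of_pos hθ0]
  -- assembly
  have hE_meas : ∀ t : ℝ, MeasurableSet {x | ENNReal.ofReal t < f x} :=
    fun t => measurableSet_lt measurable_const hf
  have hAexp_ne_top : A ^ (θ⁻¹ - 1) ≠ ⊤ := ENNReal.rpow_ne_top_of_nonneg hexp hAne
  calc ∫⁻ x in Φ.cyl I, f x ∂μ
      ≤ ∫⁻ t in Set.Ioi (0 : ℝ), (μ.restrict (Φ.cyl I)) {x | ENNReal.ofReal t < f x} :=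
        aux_lintegral_le_meas_lt (μ.restrict (Φ.cyl I)) f hf
    _ = ∫⁻ t in Set.Ioi (0 : ℝ), μ ({x | ENNReal.ofReal t < f x} ∩ Φ.cyl I) := by
        refine lintegral_congr fun t => ?_
        rw [Measure.restrict_apply (hE_meas t)]
    _ ≤ ∫⁻ t in Set.Ioi (0 : ℝ), A ^ (θ⁻¹ - 1) * (ENNReal.ofReal (t ^ (θ - 1)) * h (t ^ θ)) :=
        setLIntegral_mono' measurableSet_Ioi fun t ht => key2 t ht
    _ = A ^ (θ⁻¹ - 1) * ∫⁻ t in Set.Ioi (0 : ℝ), ENNReal.ofReal (t ^ (θ - 1)) * h (t ^ θ) :=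
        lintegral_const_mul' _ _ hAexp_ne_top
    _ = A ^ (θ⁻¹ - 1) * (ENNReal.ofReal θ⁻¹ * A) := by rw [subst]
    _ = ENNReal.ofReal θ⁻¹ * (A ^ (θ⁻¹ - 1) * A ^ (1 : ℝ)) := by rw [ENNReal.rpow_one]; ring
    _ = ENNReal.ofReal θ⁻¹ * A ^ θ⁻¹ := by
        rw [← ENNReal.rpow_add_of_nonneg _ _ hexp zero_le_one]
        congr 2
        ring
end
end

section
/- Lebesgue differentiation theorem on K: for f ∈ L^1_loc(K, μ), for μ-almost every x ∈ K, (1/μ(K_{i_n}(x))) ∫_{K_{i_n}(x)} f dμ → f(x) as n → ∞, and moreover (1/μ(K_{i_n}(x))) ∫_{K_{i_n}(x)} |f(y) − f(x)| dμ(y) → 0. -/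
open MeasureTheory Set Filter
open scoped ENNReal NNReal Topology

noncomputable section

namespace IFSLDT

open IFS

variable {d m : ℕ}

lemma S_lipschitz (Φ : IFS d m) (i : Fin m) : LipschitzWith (Φ.r i).toNNReal (Φ.S i) :=
  LipschitzWith.of_dist_le_mul fun x y => le_of_eq <| by
    rw [Φ.similitude, Real.coe_toNNReal _ (Φ.r_pos i).le]

lemma S_cont (Φ : IFS d m) (i : Fin m) : Continuous (Φ.S i) := (S_lipschitz Φ i).continuous

lemma S_inj (Φ : IFS d m) (i : Fin m) : Function.Injective (Φ.S i) := fun x y h => by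
  have h2 := Φ.similitude i x y
  rw [h, dist_self] at h2
  exact dist_eq_zero.mp ((mul_eq_zero.mp h2.symm).resolve_left (Φ.r_pos i).ne')

lemma S_image_subset_K (Φ : IFS d m) (i : Fin m) : Φ.S i '' Φ.K ⊆ Φ.K := by
  conv_rhs => rw [Φ.K_invariant]
  exact subset_iUnion (fun j => Φ.S j '' Φ.K) i

@[simp] lemma cylMap_nil (Φ : IFS d m) : Φ.cylMap [] = id := rfl

lemma cylMap_cons (Φ : IFS d m) (i : Fin m) (w : List (Fin m)) :
    Φ.cylMap (i :: w) = Φ.S i ∘ Φ.cylMap w := rfl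

lemma foldr_comp (Φ : IFS d m) (w : List (Fin m)) (g : Pt d → Pt d) :
    w.foldr (fun i g => Φ.S i ∘ g) g = Φ.cylMap w ∘ g := by
  induction w with
  | nil => simp
  | cons i w ih => simp [List.foldr_cons, ih, cylMap_cons, Function.comp_assoc]

lemma cylMap_append (Φ : IFS d m) (w w' : List (Fin m)) :
    Φ.cylMap (w ++ w') = Φ.cylMap w ∘ Φ.cylMap w' := by
  rw [cylMap, List.foldr_append, ← foldr_comp]; rfl

lemma dist_cylMap (Φ : IFS d m) (w : List (Fin m)) (x y : Pt d) :
    dist (Φ.cylMap w x) (Φ.cylMap w y) = (w.map Φ.r).prod * dist x y := by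
  induction w with
  | nil => simp
  | cons i w ih =>
      rw [cylMap_cons]
      simp only [Function.comp_apply, Φ.similitude, ih, List.map_cons, List.prod_cons, mul_assoc]

lemma rprod_pos (Φ : IFS d m) (w : List (Fin m)) : 0 < (w.map Φ.r).prod := by
  induction w with
  | nil => simp
  | cons i w ih => simpa using mul_pos (Φ.r_pos i) ih

lemma cylMap_cont (Φ : IFS d m) (w : List (Fin m)) : Continuous (Φ.cylMap w) := by
  induction w with
  | nil => simpa using continuous_id
  | cons i w ih => rw [cylMap_cons]; exact (S_cont Φ i).comp ih

@[simp] lemma cyl_nil (Φ : IFS d m) : Φ.cyl [] = Φ.K := by simp [cyl]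

lemma cyl_cons (Φ : IFS d m) (i : Fin m) (w : List (Fin m)) :
    Φ.cyl (i :: w) = Φ.S i '' Φ.cyl w := by
  rw [cyl, cylMap_cons, image_comp]; rfl

lemma cyl_subset_K (Φ : IFS d m) (w : List (Fin m)) : Φ.cyl w ⊆ Φ.K := by
  induction w with
  | nil => simp
  | cons i w ih =>
      rw [cyl_cons]
      exact (image_mono  ih).trans (S_image_subset_K Φ i)

lemma cyl_compact (Φ : IFS d m) (w : List (Fin m)) : IsCompact (Φ.cyl w) :=
  Φ.K_compact.image (cylMap_cont Φ w)

lemma cyl_meas (Φ : IFS d m) (w : List (Fin m)) : MeasurableSet (Φ.cyl w) :=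
  (cyl_compact Φ w).isClosed.measurableSet

lemma cyl_nonempty (Φ : IFS d m) (w : List (Fin m)) : (Φ.cyl w).Nonempty :=
  Φ.K_nonempty.image _

lemma cyl_append_singleton (Φ : IFS d m) (w : List (Fin m)) (i : Fin m) :
    Φ.cyl (w ++ [i]) = Φ.cylMap w '' (Φ.S i '' Φ.K) := by
  rw [cyl, cylMap_append, image_comp]
  rfl

lemma cyl_append_subset (Φ : IFS d m) (w : List (Fin m)) (i : Fin m) :
    Φ.cyl (w ++ [i]) ⊆ Φ.cyl w := by
  rw [cyl_append_singleton]
  exact image_mono  (S_image_subset_K Φ i)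

lemma exists_cyl (Φ : IFS d m) (n : ℕ) : ∀ x ∈ Φ.K, ∃ w, w.length = n ∧ x ∈ Φ.cyl w := by
  induction n with
  | zero => intro x hx; exact ⟨[], rfl, by simpa using hx⟩
  | succ n ih =>
      intro x hx
      rw [Φ.K_invariant] at hx
      obtain ⟨i, y, hy, rfl⟩ : ∃ i y, y ∈ Φ.K ∧ Φ.S i y = x := by
        simpa [mem_iUnion, eq_comm] using hx
      obtain ⟨w, hw, hyw⟩ := ih y hy
      exact ⟨i :: w, by simp [hw], by rw [cyl_cons]; exact mem_image_of_mem _ hyw⟩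

lemma cyl_disjoint (Φ : IFS d m) : ∀ (w w' : List (Fin m)), w.length = w'.length →
    w ≠ w' → Disjoint (Φ.cyl w) (Φ.cyl w') := by
  intro w
  induction w with
  | nil => intro w' hl hne; cases w' with
      | nil => exact absurd rfl hne
      | cons j w' => simp at hl
  | cons i w ih =>
      intro w' hl hne
      cases w' with
      | nil => simp at hl
      | cons j w' =>
          rcases eq_or_ne i j with rfl | hij
          · have hww' : w ≠ w' := by rintro rfl; exact hne rfl
            rw [cyl_cons, cyl_cons]
            exact ((Set.disjoint_image_iff (S_inj Φ i)).mpr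
              (ih w' (by simpa using hl) hww'))
          · refine Disjoint.mono ?_ ?_ (Φ.ssc hij)
            · rw [cyl_cons]; exact image_mono  (cyl_subset_K Φ w)
            · rw [cyl_cons]; exact image_mono  (cyl_subset_K Φ w')

lemma cyl_unique (Φ : IFS d m) {w w' : List (Fin m)} {x : Pt d} (hl : w.length = w'.length)
    (hx : x ∈ Φ.cyl w) (hx' : x ∈ Φ.cyl w') : w = w' := by
  by_contra hne
  exact (cyl_disjoint Φ w w' hl hne).ne_of_mem hx hx' rfl


section Measure

variable {Φ : IFS d m} {p : Fin m → ℝ≥0∞} {μ : Measure (Pt d)}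

lemma m_ne_zero (hμ : Φ.SelfSimilar p μ) : m ≠ 0 := by
  rintro rfl
  have := hμ.1
  simp at this

lemma measure_compl_K (hμ : Φ.SelfSimilar p μ) : μ Φ.Kᶜ = 0 := by
  haveI := hμ.2.2.1
  rw [measure_compl Φ.K_compact.measurableSet (measure_ne_top μ _), measure_univ,
    hμ.2.2.2.1, tsub_self]

lemma ae_mem_K (hμ : Φ.SelfSimilar p μ) : ∀ᵐ x ∂μ, x ∈ Φ.K := by
  rw [ae_iff]
  exact measure_compl_K hμ

lemma measure_S_image (hμ : Φ.SelfSimilar p μ) (i : Fin m) {A : Set (Pt d)}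
    (hAK : A ⊆ Φ.K) (hA : MeasurableSet A) (hSA : MeasurableSet (Φ.S i '' A)) :
    μ (Φ.S i '' A) = p i * μ A := by
  conv_lhs => rw [hμ.2.2.2.2]
  rw [Measure.finset_sum_apply]
  rw [Finset.sum_eq_single i]
  · rw [Measure.smul_apply, Measure.map_apply (S_cont Φ i).measurable hSA,
      Set.preimage_image_eq A (S_inj Φ i), smul_eq_mul]
  · intro j _ hj
    rw [Measure.smul_apply, Measure.map_apply (S_cont Φ j).measurable hSA, smul_eq_mul]
    have hsub : Φ.S j ⁻¹' (Φ.S i '' A) ⊆ Φ.Kᶜ := by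
      intro x hx
      intro hxK
      have h1 : Φ.S j x ∈ Φ.S i '' Φ.K := image_mono  hAK hx
      have h2 : Φ.S j x ∈ Φ.S j '' Φ.K := mem_image_of_mem _ hxK
      exact (Φ.ssc hj.symm).ne_of_mem h1 h2 rfl
    have := measure_mono (μ := μ) hsub
    rw [measure_compl_K hμ] at this
    simp [le_antisymm this zero_le]
  · intro h; exact absurd (Finset.mem_univ i) h

lemma measure_cyl (hμ : Φ.SelfSimilar p μ) (w : List (Fin m)) :
    μ (Φ.cyl w) = (w.map p).prod := by
  induction w with
  | nil => simpa using hμ.2.2.2.1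
  | cons i w ih =>
      rw [cyl_cons]
      rw [measure_S_image hμ i (cyl_subset_K Φ w) (cyl_meas Φ w)
        (by rw [← cyl_cons]; exact cyl_meas Φ _), ih]
      simp

lemma measure_cyl_ne_zero (hμ : Φ.SelfSimilar p μ) (w : List (Fin m)) :
    μ (Φ.cyl w) ≠ 0 := by
  rw [measure_cyl hμ]
  induction w with
  | nil => simp
  | cons i w ih =>
      simp only [List.map_cons, List.prod_cons]
      exact (ENNReal.mul_pos (hμ.2.1 i).ne' (by simpa using ih)).ne'

lemma measure_cyl_ne_top (hμ : Φ.SelfSimilar p μ) (w : List (Fin m)) :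
    μ (Φ.cyl w) ≠ ⊤ := by
  haveI := hμ.2.2.1
  exact measure_ne_top μ _

lemma toReal_measure_cyl_pos (hμ : Φ.SelfSimilar p μ) (w : List (Fin m)) :
    0 < (μ (Φ.cyl w)).toReal :=
  ENNReal.toReal_pos (measure_cyl_ne_zero hμ w) (measure_cyl_ne_top hμ w)

end Measure

open Classical in
noncomputable def idx (Φ : IFS d m) (n : ℕ) (x : Pt d) : Option (List (Fin m)) :=
  if h : ∃ w, w.length = n ∧ x ∈ Φ.cyl w then some h.choose else none

lemma idx_eq_some (Φ : IFS d m) {n : ℕ} {w : List (Fin m)} {x : Pt d}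
    (hw : w.length = n) (hx : x ∈ Φ.cyl w) : idx Φ n x = some w := by
  have h : ∃ w, w.length = n ∧ x ∈ Φ.cyl w := ⟨w, hw, hx⟩
  rw [idx, dif_pos h]
  exact congrArg some (cyl_unique Φ (h.choose_spec.1.trans hw.symm) h.choose_spec.2 hx)

lemma idx_eq_some_iff (Φ : IFS d m) {n : ℕ} {w : List (Fin m)} {x : Pt d} :
    idx Φ n x = some w ↔ w.length = n ∧ x ∈ Φ.cyl w := by
  constructor
  · intro h
    rw [idx] at h
    split at h
    · rename_i he
      obtain rfl : he.choose = w := by simpa using h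
      exact he.choose_spec
    · simp at h
  · exact fun h => idx_eq_some Φ h.1 h.2

lemma idx_eq_none_iff (Φ : IFS d m) {n : ℕ} {x : Pt d} :
    idx Φ n x = none ↔ x ∉ Φ.K := by
  rw [idx]
  constructor
  · intro h hxK
    rw [dif_pos (exists_cyl Φ n x hxK)] at h
    simp at h
  · intro hxK
    rw [dif_neg]
    rintro ⟨w, _, hxw⟩
    exact hxK (cyl_subset_K Φ w hxw)

def filt (Φ : IFS d m) (n : ℕ) : MeasurableSpace (Pt d) :=
  MeasurableSpace.comap (idx Φ n) ⊤

lemma measurableSet_filt_iff (Φ : IFS d m) {n : ℕ} {s : Set (Pt d)} :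
    MeasurableSet[filt Φ n] s ↔ ∃ T, idx Φ n ⁻¹' T = s :=
  ⟨fun ⟨T, _, h⟩ => ⟨T, h⟩, fun ⟨T, h⟩ => ⟨T, MeasurableSpace.measurableSet_top, h⟩⟩

lemma idx_preimage_some (Φ : IFS d m) {n : ℕ} {w : List (Fin m)} (hw : w.length = n) :
    idx Φ n ⁻¹' {some w} = Φ.cyl w := by
  ext x
  simp [mem_preimage, idx_eq_some_iff, hw]

lemma idx_preimage_none (Φ : IFS d m) (n : ℕ) :
    idx Φ n ⁻¹' {none} = Φ.Kᶜ := by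
  ext x
  simp [mem_preimage, idx_eq_none_iff]

lemma filt_le (Φ : IFS d m) (n : ℕ) :
    filt Φ n ≤ (inferInstance : MeasurableSpace (Pt d)) := by
  refine Measurable.comap_le ?_
  refine @measurable_to_countable (Option (List (Fin m))) (Pt d) ⊤ _ _ _ (fun y => ?_)
  rcases h : idx Φ n y with _ | w
  · rw [idx_preimage_none]
    exact Φ.K_compact.isClosed.measurableSet.compl
  · have hw : w.length = n := ((idx_eq_some_iff Φ).mp h).1
    rw [idx_preimage_some Φ hw]
    exact cyl_meas Φ w

lemma idx_succ (Φ : IFS d m) (n : ℕ) :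
    idx Φ n = Option.map List.dropLast ∘ idx Φ (n + 1) := by
  funext x
  rcases h : idx Φ (n + 1) x with _ | w
  · simp [Function.comp_apply, h, (idx_eq_none_iff Φ).mpr ((idx_eq_none_iff Φ).mp h)]
  · obtain ⟨hwl, hxw⟩ := (idx_eq_some_iff Φ).mp h
    have hne : w ≠ [] := by intro h0; rw [h0] at hwl; simp at hwl
    have hx' : x ∈ Φ.cyl w.dropLast := by
      have := cyl_append_subset Φ w.dropLast (w.getLast hne)
      rw [List.dropLast_append_getLast hne] at this
      exact this hxw
    have hl' : w.dropLast.length = n := by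
      rw [List.length_dropLast, hwl]; rfl
    simp [Function.comp_apply, h, idx_eq_some Φ hl' hx']

lemma filt_mono (Φ : IFS d m) : Monotone (filt Φ) := by
  refine monotone_nat_of_le_succ (fun n => ?_)
  rw [filt, idx_succ Φ n, ← MeasurableSpace.comap_comp]
  exact MeasurableSpace.comap_mono le_top

def ffilt (Φ : IFS d m) : Filtration ℕ (inferInstance : MeasurableSpace (Pt d)) :=
  ⟨filt Φ, filt_mono Φ, filt_le Φ⟩

lemma cyl_mem_filt (Φ : IFS d m) {n : ℕ} {w : List (Fin m)} (hw : w.length = n) :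
    MeasurableSet[filt Φ n] (Φ.cyl w) :=
  (measurableSet_filt_iff Φ).mpr ⟨{some w}, idx_preimage_some Φ hw⟩

lemma compl_K_mem_filt (Φ : IFS d m) (n : ℕ) : MeasurableSet[filt Φ n] Φ.Kᶜ :=
  (measurableSet_filt_iff Φ).mpr ⟨{none}, idx_preimage_none Φ n⟩

lemma K_mem_filt (Φ : IFS d m) (n : ℕ) : MeasurableSet[filt Φ n] Φ.K := by
  have := (compl_K_mem_filt Φ n).compl
  rwa [compl_compl] at this

lemma eq_on_cyl_of_measurable (Φ : IFS d m) {n : ℕ} {h : Pt d → ℝ}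
    (hh : Measurable[filt Φ n] h) {w : List (Fin m)} (hw : w.length = n)
    {x y : Pt d} (hx : x ∈ Φ.cyl w) (hy : y ∈ Φ.cyl w) : h x = h y := by
  obtain ⟨T, hT⟩ := (measurableSet_filt_iff Φ).mp (hh (measurableSet_singleton (h x)))
  have hxT : idx Φ n x ∈ T := by
    have hx' : x ∈ h ⁻¹' {h x} := rfl
    rw [← hT] at hx'
    exact hx'
  have hyT : y ∈ idx Φ n ⁻¹' T := by
    show idx Φ n y ∈ T
    rw [idx_eq_some Φ hw hy, ← idx_eq_some Φ hw hx]
    exact hxT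
  have : y ∈ h ⁻¹' {h x} := hT ▸ hyT
  exact (mem_singleton_iff.mp this).symm


lemma diam_cyl_le (Φ : IFS d m) (w : List (Fin m)) :
    Metric.diam (Φ.cyl w) ≤ (w.map Φ.r).prod * Metric.diam Φ.K := by
  apply Metric.diam_le_of_forall_dist_le (mul_nonneg (rprod_pos Φ w).le Metric.diam_nonneg)
  rintro y ⟨a, ha, rfl⟩ z ⟨b, hb, rfl⟩
  rw [dist_cylMap]
  exact mul_le_mul_of_nonneg_left
    (Metric.dist_le_diam_of_mem Φ.K_compact.isBounded ha hb) (rprod_pos Φ w).le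

lemma exists_small_scale (Φ : IFS d m) (hm : m ≠ 0) {ε : ℝ} (hε : 0 < ε) :
    ∃ n, ∀ w : List (Fin m), w.length = n → ∀ y ∈ Φ.cyl w, ∀ z ∈ Φ.cyl w, dist y z < ε := by
  haveI : Nonempty (Fin m) := ⟨⟨0, Nat.pos_of_ne_zero hm⟩⟩
  set ρ := Finset.univ.sup' Finset.univ_nonempty Φ.r with hρdef
  have hρpos : 0 ≤ ρ :=
    le_trans (Φ.r_pos (Classical.arbitrary _)).le (Finset.le_sup' _ (Finset.mem_univ _))
  have hρ1 : ρ < 1 := (Finset.sup'_lt_iff _).mpr fun i _ => Φ.r_lt_one i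
  have hprod : ∀ w : List (Fin m), (w.map Φ.r).prod ≤ ρ ^ w.length := by
    intro w
    induction w with
    | nil => simp
    | cons i w ih =>
        simp only [List.map_cons, List.prod_cons, List.length_cons, pow_succ]
        rw [mul_comm (ρ ^ w.length) ρ]
        exact mul_le_mul (Finset.le_sup' _ (Finset.mem_univ i)) ih
          (rprod_pos Φ w).le hρpos
  have htend : Tendsto (fun n => ρ ^ n * (Metric.diam Φ.K + 1)) atTop (𝓝 0) := by
    simpa using (tendsto_pow_atTop_nhds_zero_of_lt_one hρpos hρ1).mul_const
      (Metric.diam Φ.K + 1)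
  obtain ⟨n, hn⟩ := (htend.eventually_lt_const hε).exists
  refine ⟨n, fun w hw y hy z hz => ?_⟩
  calc dist y z ≤ Metric.diam (Φ.cyl w) :=
        Metric.dist_le_diam_of_mem (cyl_compact Φ w).isBounded hy hz
    _ ≤ (w.map Φ.r).prod * Metric.diam Φ.K := diam_cyl_le Φ w
    _ ≤ ρ ^ n * (Metric.diam Φ.K + 1) := by
        refine mul_le_mul (hw ▸ hprod w) (by linarith) Metric.diam_nonneg
          (pow_nonneg hρpos n)
    _ < ε := hn

lemma open_inter_eq_biUnion (Φ : IFS d m) (hm : m ≠ 0) {U : Set (Pt d)} (hU : IsOpen U) :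
    U ∩ Φ.K = ⋃ w ∈ {w : List (Fin m) | Φ.cyl w ⊆ U}, Φ.cyl w := by
  apply Subset.antisymm
  · rintro x ⟨hxU, hxK⟩
    obtain ⟨ε, hε, hball⟩ := Metric.isOpen_iff.mp hU x hxU
    obtain ⟨n, hn⟩ := exists_small_scale Φ hm hε
    obtain ⟨w, hwl, hxw⟩ := exists_cyl Φ n x hxK
    have hsub : Φ.cyl w ⊆ U := fun y hy =>
      hball (by rw [Metric.mem_ball]; exact hn w hwl y hy x hxw)
    exact mem_biUnion hsub hxw
  · exact iUnion₂_subset fun w hw => subset_inter hw (cyl_subset_K Φ w)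

lemma inter_K_mem_iSup_filt (Φ : IFS d m) (hm : m ≠ 0) {B : Set (Pt d)}
    (hB : MeasurableSet B) : MeasurableSet[⨆ n, filt Φ n] (B ∩ Φ.K) := by
  have hKm : MeasurableSet[⨆ n, filt Φ n] Φ.K := (le_iSup (filt Φ) 0) _ (K_mem_filt Φ 0)
  have hcylm : ∀ w : List (Fin m), MeasurableSet[⨆ n, filt Φ n] (Φ.cyl w) := fun w =>
    (le_iSup (filt Φ) w.length) _ (cyl_mem_filt Φ rfl)
  have hopen : ∀ U : Set (Pt d), IsOpen U → MeasurableSet[⨆ n, filt Φ n] (U ∩ Φ.K) := by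
    intro U hU
    rw [open_inter_eq_biUnion Φ hm hU]
    exact MeasurableSet.biUnion (Set.to_countable _) fun w _ => hcylm w
  refine MeasurableSet.induction_on_open (C := fun B _ => MeasurableSet[⨆ n, filt Φ n] (B ∩ Φ.K))
    (fun U hU => hopen U hU) (fun t _ ht => ?_) (fun f _ _ hf => ?_) _ hB
  · show MeasurableSet[⨆ n, filt Φ n] (tᶜ ∩ Φ.K)
    have hEq : tᶜ ∩ Φ.K = Φ.K \ (t ∩ Φ.K) := by
      ext x; simp only [mem_inter_iff, mem_compl_iff, mem_diff]; tauto
    rw [hEq]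
    exact MeasurableSet.diff hKm ht
  · show MeasurableSet[⨆ n, filt Φ n] ((⋃ i, f i) ∩ Φ.K)
    rw [iUnion_inter]
    exact MeasurableSet.iUnion hf


theorem key (Φ : IFS d m) (p : Fin m → ℝ≥0∞) (μ : Measure (Pt d)) (hμ : Φ.SelfSimilar p μ)
    (f : Pt d → ℝ) (hf : IntegrableOn f Φ.K μ) :
    ∀ᵐ x ∂μ, ∀ w : ℕ → List (Fin m), (∀ n, (w n).length = n ∧ x ∈ Φ.cyl (w n)) →
      Tendsto (fun n => ⨍ y in Φ.cyl (w n), f y ∂μ) atTop (𝓝 (f x)) := by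
  have hm : m ≠ 0 := m_ne_zero hμ
  haveI : IsProbabilityMeasure μ := hμ.2.2.1
  have hres : μ.restrict Φ.K = μ := Measure.restrict_eq_self_of_ae_mem (ae_mem_K hμ)
  have hfint : Integrable f μ := by rwa [IntegrableOn, hres] at hf
  set f' : Pt d → ℝ := (hfint.1).mk f with hf'def
  have hf'sm : StronglyMeasurable f' := hfint.1.stronglyMeasurable_mk
  have hff' : f =ᵐ[μ] f' := hfint.1.ae_eq_mk
  set g : Pt d → ℝ := Φ.K.indicator f' with hgdef
  have hfg : f =ᵐ[μ] g := by
    filter_upwards [hff', ae_mem_K hμ] with x h1 h2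
    rw [hgdef, Set.indicator_of_mem h2]
    exact h1
  have hg_int : Integrable g μ := hfint.congr hfg
  have hg_meas : StronglyMeasurable[⨆ n, filt Φ n] g := by
    have hmeas : Measurable[⨆ n, filt Φ n] g := by
      intro B hB
      rw [hgdef, Set.indicator_preimage, Set.ite]
      apply MeasurableSet.union
      · exact inter_K_mem_iSup_filt Φ hm (hf'sm.measurable hB)
      · by_cases h0 : (0 : ℝ) ∈ B
        · have : (0 : Pt d → ℝ) ⁻¹' B \ Φ.K = Φ.Kᶜ := by
            ext x; simp [h0]
          rw [this]
          exact (le_iSup (filt Φ) 0) _ (compl_K_mem_filt Φ 0)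
        · have : (0 : Pt d → ℝ) ⁻¹' B \ Φ.K = ∅ := by
            ext x; simp [h0]
          rw [this]
          exact @MeasurableSet.empty _ (⨆ n, filt Φ n)
    exact Measurable.stronglyMeasurable (mα := ⨆ n, filt Φ n) hmeas
  have hconv := hg_int.tendsto_ae_condExp (ℱ := ffilt Φ) hg_meas
  have hcond : ∀ n (w : List (Fin m)), w.length = n → ∀ x ∈ Φ.cyl w,
      (μ[g|(ffilt Φ) n]) x = ⨍ y in Φ.cyl w, g y ∂μ := by
    intro n w hw x hx
    have hsm : StronglyMeasurable[(ffilt Φ) n] (μ[g|(ffilt Φ) n]) := stronglyMeasurable_condExp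
    have hconst : Set.EqOn (μ[g|(ffilt Φ) n]) (fun _ => (μ[g|(ffilt Φ) n]) x) (Φ.cyl w) :=
      fun y hy => eq_on_cyl_of_measurable Φ hsm.measurable hw hy hx
    have hint : ∫ y in Φ.cyl w, (μ[g|(ffilt Φ) n]) y ∂μ = ∫ y in Φ.cyl w, g y ∂μ :=
      setIntegral_condExp ((ffilt Φ).le n) hg_int (cyl_mem_filt Φ hw)
    have hconstint : ∫ y in Φ.cyl w, (μ[g|(ffilt Φ) n]) y ∂μ
        = (μ (Φ.cyl w)).toReal • (μ[g|(ffilt Φ) n]) x := by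
      rw [setIntegral_congr_fun (cyl_meas Φ w) hconst, setIntegral_const, measureReal_def]
    rw [setAverage_eq, measureReal_def, ← hint, hconstint, smul_smul,
      inv_mul_cancel₀ (toReal_measure_cyl_pos hμ w).ne', one_smul]
  filter_upwards [hconv, hfg] with x hx hgfx
  intro w hw
  have heq : (fun n => ⨍ y in Φ.cyl (w n), f y ∂μ) = fun n => (μ[g|(ffilt Φ) n]) x := by
    funext n
    calc ⨍ y in Φ.cyl (w n), f y ∂μ = ⨍ y in Φ.cyl (w n), g y ∂μ :=
          average_congr (ae_restrict_of_ae hfg)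
      _ = (μ[g|(ffilt Φ) n]) x := (hcond n (w n) (hw n).1 x (hw n).2).symm
  rw [heq, hgfx]
  exact hx

end IFSLDT

/-- Lebesgue differentiation theorem on the self-similar set `K`: averages over the
generation-`n` basic cubes containing `x` converge to `f(x)` for `μ`-a.e. `x`. -/
theorem lebesgue_differentiation (d m : ℕ) (Φ : IFS d m) (p : Fin m → ℝ≥0∞)
    (μ : Measure (Pt d)) (hμ : Φ.SelfSimilar p μ)
    (f : Pt d → ℝ) (hf : IntegrableOn f Φ.K μ) :
    ∀ᵐ x ∂μ, ∀ w : ℕ → List (Fin m),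
      (∀ n, (w n).length = n ∧ x ∈ Φ.cyl (w n)) →
      Tendsto (fun n => ⨍ y in Φ.cyl (w n), f y ∂μ) atTop (𝓝 (f x)) ∧
      Tendsto (fun n => ⨍ y in Φ.cyl (w n), |f y - f x| ∂μ) atTop (𝓝 0) := by

  haveI : IsProbabilityMeasure μ := hμ.2.2.1
  have h1 := IFSLDT.key Φ p μ hμ f hf
  have h2 : ∀ᵐ x ∂μ, ∀ q : ℚ, ∀ w : ℕ → List (Fin m),
      (∀ n, (w n).length = n ∧ x ∈ Φ.cyl (w n)) →
      Tendsto (fun n => ⨍ y in Φ.cyl (w n), |f y - (q : ℝ)| ∂μ) atTop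
        (𝓝 (|f x - (q : ℝ)|)) := by
    rw [ae_all_iff]
    intro q
    exact IFSLDT.key Φ p μ hμ (fun y => |f y - (q : ℝ)|)
      ((hf.sub (integrableOn_const (measure_ne_top _ _))).abs)
  filter_upwards [h1, h2] with x hx1 hx2
  intro w hw
  refine ⟨hx1 w hw, ?_⟩
  have hmeas : ∀ n, MeasurableSet (Φ.cyl (w n)) := fun n => IFSLDT.cyl_meas Φ _
  have hfint : ∀ n, IntegrableOn f (Φ.cyl (w n)) μ := fun n =>
    hf.mono_set (IFSLDT.cyl_subset_K Φ _)
  have hint1 : ∀ n, IntegrableOn (fun y => |f y - f x|) (Φ.cyl (w n)) μ := fun n =>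
    ((hfint n).sub (integrableOn_const (measure_ne_top _ _))).abs
  have hnonneg : ∀ n, 0 ≤ ⨍ y in Φ.cyl (w n), |f y - f x| ∂μ := fun n => by
    rw [setAverage_eq]
    exact smul_nonneg (inv_nonneg.mpr ENNReal.toReal_nonneg)
      (integral_nonneg fun y => abs_nonneg _)
  rw [tendsto_order]
  constructor
  · intro c hc
    exact Eventually.of_forall fun n => lt_of_lt_of_le hc (hnonneg n)
  · intro c hc
    obtain ⟨q, hq⟩ := exists_rat_near (f x) (by linarith : (0 : ℝ) < c / 4)
    have hql := hx2 q w hw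
    have hev : ∀ᶠ n in atTop, ⨍ y in Φ.cyl (w n), |f y - (q : ℝ)| ∂μ < c / 2 :=
      hql.eventually_lt_const (by linarith)
    filter_upwards [hev] with n hn
    have hintq : IntegrableOn (fun y => |f y - (q : ℝ)|) (Φ.cyl (w n)) μ :=
      ((hfint n).sub (integrableOn_const (measure_ne_top _ _))).abs
    have hint2 : IntegrableOn (fun y => |f y - (q : ℝ)| + |(q : ℝ) - f x|)
        (Φ.cyl (w n)) μ :=
      hintq.add (integrableOn_const (measure_ne_top _ _))
    have hmono : ∫ y in Φ.cyl (w n), |f y - f x| ∂μ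
        ≤ ∫ y in Φ.cyl (w n), (|f y - (q : ℝ)| + |(q : ℝ) - f x|) ∂μ :=
      setIntegral_mono_on (hint1 n) hint2 (hmeas n) (fun y _ => abs_sub_le _ _ _)
    have hsplit : ∫ y in Φ.cyl (w n), (|f y - (q : ℝ)| + |(q : ℝ) - f x|) ∂μ
        = (∫ y in Φ.cyl (w n), |f y - (q : ℝ)| ∂μ)
          + (μ (Φ.cyl (w n))).toReal * |(q : ℝ) - f x| := by
      rw [integral_add hintq (integrableOn_const (measure_ne_top _ _)),
        setIntegral_const, smul_eq_mul, measureReal_def]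
    have htr : (0 : ℝ) < (μ (Φ.cyl (w n))).toReal := IFSLDT.toReal_measure_cyl_pos hμ _
    have havg : ⨍ y in Φ.cyl (w n), |f y - f x| ∂μ
        ≤ (⨍ y in Φ.cyl (w n), |f y - (q : ℝ)| ∂μ) + |(q : ℝ) - f x| := by
      rw [setAverage_eq, setAverage_eq, smul_eq_mul, smul_eq_mul]
      calc (μ (Φ.cyl (w n))).toReal⁻¹ * ∫ y in Φ.cyl (w n), |f y - f x| ∂μ
          ≤ (μ (Φ.cyl (w n))).toReal⁻¹ * ((∫ y in Φ.cyl (w n), |f y - (q : ℝ)| ∂μ)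
              + (μ (Φ.cyl (w n))).toReal * |(q : ℝ) - f x|) := by
            refine mul_le_mul_of_nonneg_left ?_ (inv_nonneg.mpr htr.le)
            rw [← hsplit]; exact hmono
        _ = (μ (Φ.cyl (w n))).toReal⁻¹ * (∫ y in Φ.cyl (w n), |f y - (q : ℝ)| ∂μ)
              + |(q : ℝ) - f x| := by
            rw [mul_add, inv_mul_cancel_left₀ htr.ne']
    have hqfx : |(q : ℝ) - f x| < c / 4 := by rw [abs_sub_comm]; exact hq
    calc ⨍ y in Φ.cyl (w n), |f y - f x| ∂μ
        ≤ (⨍ y in Φ.cyl (w n), |f y - (q : ℝ)| ∂μ) + |(q : ℝ) - f x| := havg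
      _ < c / 2 + c / 4 := add_lt_add hn hqfx
      _ < c := by linarith
end
end

section
/- Stein-type converse (reverse L log L): if f ∈ L^1(K, μ) and M^μ_D f ∈ L^1(K, μ), then |f| log^+|f| ∈ L^1(K, μ) and there is a constant C > 0 with ∫_K |f| log^+|f| dμ ≤ C ∫_K M^μ_D f dμ. -/
open MeasureTheory Set Filter
open scoped ENNReal NNReal Topology

noncomputable section

namespace SteinAux

open IFS

variable {d m : ℕ}

lemma S_continuous (Φ : IFS d m) (i : Fin m) : Continuous (Φ.S i) :=
  (LipschitzWith.of_dist_le_mul (K := ⟨Φ.r i, (Φ.r_pos i).le⟩)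
    (fun x y => le_of_eq (Φ.similitude i x y))).continuous

lemma S_injective (Φ : IFS d m) (i : Fin m) : Function.Injective (Φ.S i) := by
  intro x y h
  have h0 : Φ.r i * dist x y = 0 := by rw [← Φ.similitude i x y, h, dist_self]
  rcases mul_eq_zero.1 h0 with h1 | h1
  · exact absurd h1 (Φ.r_pos i).ne'
  · exact dist_eq_zero.1 h1

lemma cyl_nil (Φ : IFS d m) : Φ.cyl [] = Φ.K := by
  simp [IFS.cyl, IFS.cylMap]

lemma cyl_cons (Φ : IFS d m) (i : Fin m) (w : List (Fin m)) :
    Φ.cyl (i :: w) = Φ.S i '' Φ.cyl w := by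
  show (Φ.S i ∘ Φ.cylMap w) '' Φ.K = _
  rw [Set.image_comp]
  rfl

lemma cylMap_continuous (Φ : IFS d m) (w : List (Fin m)) : Continuous (Φ.cylMap w) := by
  induction w with
  | nil => exact continuous_id
  | cons i w ih => exact (S_continuous Φ i).comp ih

lemma cyl_isCompact (Φ : IFS d m) (w : List (Fin m)) : IsCompact (Φ.cyl w) :=
  Φ.K_compact.image (cylMap_continuous Φ w)

lemma cyl_measurableSet (Φ : IFS d m) (w : List (Fin m)) : MeasurableSet (Φ.cyl w) :=
  (cyl_isCompact Φ w).measurableSet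

lemma SK_subset (Φ : IFS d m) (i : Fin m) : Φ.S i '' Φ.K ⊆ Φ.K := by
  conv_rhs => rw [Φ.K_invariant]
  exact subset_iUnion (fun j => Φ.S j '' Φ.K) i

lemma cyl_subset_K (Φ : IFS d m) (w : List (Fin m)) : Φ.cyl w ⊆ Φ.K := by
  induction w with
  | nil => rw [cyl_nil]
  | cons i w ih => rw [cyl_cons]; exact (Set.image_mono ih).trans (SK_subset Φ i)

lemma cylMap_append (Φ : IFS d m) (u v : List (Fin m)) :
    Φ.cylMap (u ++ v) = Φ.cylMap u ∘ Φ.cylMap v := by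
  induction u with
  | nil => rfl
  | cons i u ih => show Φ.S i ∘ Φ.cylMap (u ++ v) = _; rw [ih]; rfl

lemma cyl_mono_prefix (Φ : IFS d m) {u w : List (Fin m)} (h : u <+: w) :
    Φ.cyl w ⊆ Φ.cyl u := by
  obtain ⟨v, rfl⟩ := h
  rw [IFS.cyl, cylMap_append, Set.image_comp]
  exact Set.image_mono (cyl_subset_K Φ v)

lemma cyl_disjoint (Φ : IFS d m) :
    ∀ w u : List (Fin m), ¬ w <+: u → ¬ u <+: w → Disjoint (Φ.cyl w) (Φ.cyl u) := by
  intro w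
  induction w with
  | nil => intro u hw _; exact absurd List.nil_prefix hw
  | cons i w ih =>
    intro u hw hu
    cases u with
    | nil => exact absurd List.nil_prefix hu
    | cons j u =>
      by_cases hij : i = j
      · subst hij
        rw [cyl_cons, cyl_cons]
        have hd : Disjoint (Φ.cyl w) (Φ.cyl u) :=
          ih u (fun h => hw (List.cons_prefix_cons.2 ⟨rfl, h⟩))
            (fun h => hu (List.cons_prefix_cons.2 ⟨rfl, h⟩))
        exact (Set.disjoint_image_iff (S_injective Φ i)).2 hd
      · rw [cyl_cons, cyl_cons]
        exact (Φ.ssc hij).mono (Set.image_mono (cyl_subset_K Φ w))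
          (Set.image_mono (cyl_subset_K Φ u))

lemma exists_min_prefix_aux (𝒞 : Set (List (Fin m))) :
    ∀ n : ℕ, ∀ w : List (Fin m), w.length ≤ n → w ∈ 𝒞 →
      ∃ u, u ∈ 𝒞 ∧ u <+: w ∧ ∀ v, v <+: u → v ≠ u → v ∉ 𝒞 := by
  intro n
  induction n with
  | zero =>
    intro w hw hw𝒞
    refine ⟨w, hw𝒞, List.prefix_refl w, fun v hv hne => ?_⟩
    exfalso
    have : w = [] := List.eq_nil_of_length_eq_zero (Nat.le_zero.1 hw)
    subst this
    exact hne (List.prefix_nil.1 hv)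
  | succ n ih =>
    intro w hw hw𝒞
    by_cases h : ∃ v, v <+: w ∧ v ≠ w ∧ v ∈ 𝒞
    · obtain ⟨v, hvw, hne, hv𝒞⟩ := h
      have hlt : v.length < w.length :=
        lt_of_le_of_ne hvw.length_le (fun he => hne (hvw.eq_of_length he))
      obtain ⟨u, h1, h2, h3⟩ := ih v (by omega) hv𝒞
      exact ⟨u, h1, h2.trans hvw, h3⟩
    · exact ⟨w, hw𝒞, List.prefix_refl w, fun v h1 h2 hv => h ⟨v, h1, h2, hv⟩⟩

lemma exists_min_prefix (𝒞 : Set (List (Fin m))) (w : List (Fin m)) (hw : w ∈ 𝒞) :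
    ∃ u, u ∈ 𝒞 ∧ u <+: w ∧ ∀ v, v <+: u → v ≠ u → v ∉ 𝒞 :=
  exists_min_prefix_aux 𝒞 w.length w le_rfl hw

/-- the set of minimal (w.r.t. prefix order) elements of a family of words -/
def minSet (𝒞 : Set (List (Fin m))) : Set (List (Fin m)) :=
  {w | w ∈ 𝒞 ∧ ∀ v, v <+: w → v ≠ w → v ∉ 𝒞}

lemma biUnion_minSet (Φ : IFS d m) (𝒞 : Set (List (Fin m))) :
    ⋃ w ∈ 𝒞, Φ.cyl w = ⋃ w ∈ minSet 𝒞, Φ.cyl w := by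
  apply Set.Subset.antisymm
  · refine Set.iUnion₂_subset fun w hw => ?_
    obtain ⟨u, h1, h2, h3⟩ := exists_min_prefix 𝒞 w hw
    exact (cyl_mono_prefix Φ h2).trans (Set.subset_biUnion_of_mem ⟨h1, h3⟩)
  · exact Set.iUnion₂_subset fun w hw => Set.subset_biUnion_of_mem hw.1

lemma minSet_pairwiseDisjoint (Φ : IFS d m) (𝒞 : Set (List (Fin m))) :
    (minSet 𝒞).PairwiseDisjoint (Φ.cyl) := by
  intro u hu w hw hne
  by_cases h1 : u <+: w
  · exact absurd hu.1 (hw.2 u h1 hne)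
  · by_cases h2 : w <+: u
    · exact absurd hw.1 (hu.2 w h2 (Ne.symm hne))
    · exact cyl_disjoint Φ u w h1 h2

end SteinAux

namespace SteinAux

variable {d m : ℕ}

lemma exists_len_cyl (Φ : IFS d m) : ∀ (n : ℕ) (x : Pt d), x ∈ Φ.K →
    ∃ w : List (Fin m), w.length = n ∧ x ∈ Φ.cyl w := by
  intro n
  induction n with
  | zero => intro x hx; exact ⟨[], rfl, by rwa [cyl_nil]⟩
  | succ n ih =>
    intro x hx
    rw [Φ.K_invariant] at hx
    obtain ⟨i, y, hy, rfl⟩ : ∃ i y, y ∈ Φ.K ∧ Φ.S i y = x := by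
      simpa [Set.mem_iUnion] using hx
    obtain ⟨w, hlen, hyw⟩ := ih y hy
    exact ⟨i :: w, by simp [hlen], by rw [cyl_cons]; exact Set.mem_image_of_mem _ hyw⟩

lemma diam_cyl (Φ : IFS d m) (ρ : ℝ) (hρ : ∀ i, Φ.r i ≤ ρ) (hρ0 : 0 ≤ ρ) :
    ∀ w : List (Fin m), Metric.diam (Φ.cyl w) ≤ ρ ^ w.length * Metric.diam Φ.K := by
  intro w
  induction w with
  | nil => rw [cyl_nil]; simp
  | cons i w ih =>
    rw [cyl_cons]
    have hb : Bornology.IsBounded (Φ.cyl w) := (cyl_isCompact Φ w).isBounded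
    have step : Metric.diam (Φ.S i '' Φ.cyl w) ≤ Φ.r i * Metric.diam (Φ.cyl w) := by
      apply Metric.diam_le_of_forall_dist_le (mul_nonneg (Φ.r_pos i).le Metric.diam_nonneg)
      rintro y ⟨a, ha, rfl⟩ z ⟨b, hb', rfl⟩
      rw [Φ.similitude]
      exact mul_le_mul_of_nonneg_left (Metric.dist_le_diam_of_mem hb ha hb') (Φ.r_pos i).le
    refine step.trans ?_
    calc Φ.r i * Metric.diam (Φ.cyl w) ≤ ρ * (ρ ^ w.length * Metric.diam Φ.K) :=
          mul_le_mul (hρ i) ih Metric.diam_nonneg hρ0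
      _ = ρ ^ (i :: w).length * Metric.diam Φ.K := by ring_nf; rw [List.length_cons]; ring

lemma exists_small_cyl (Φ : IFS d m) (x : Pt d) (hx : x ∈ Φ.K) (W : Set (Pt d))
    (hW : IsOpen W) (hxW : x ∈ W) : ∃ w, x ∈ Φ.cyl w ∧ Φ.cyl w ⊆ W := by
  haveI : Nonempty (Fin m) := by
    obtain ⟨y, hy⟩ := Φ.K_nonempty
    rw [Φ.K_invariant] at hy
    obtain ⟨i, -⟩ := Set.mem_iUnion.1 hy
    exact ⟨i⟩
  obtain ⟨ε, hε, hball⟩ := Metric.isOpen_iff.1 hW x hxW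
  set ρ : ℝ := Finset.univ.sup' Finset.univ_nonempty Φ.r with hρdef
  have hρ : ∀ i, Φ.r i ≤ ρ := fun i => Finset.le_sup' Φ.r (Finset.mem_univ i)
  have hρ0 : 0 ≤ ρ := (Φ.r_pos (Classical.arbitrary _)).le.trans (hρ _)
  have hρ1 : ρ < 1 := (Finset.sup'_lt_iff Finset.univ_nonempty).2 fun i _ => Φ.r_lt_one i
  have htend : Filter.Tendsto (fun n : ℕ => ρ ^ n * Metric.diam Φ.K) Filter.atTop (nhds 0) := by
    simpa using (tendsto_pow_atTop_nhds_zero_of_lt_one hρ0 hρ1).mul_const (Metric.diam Φ.K)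
  obtain ⟨n, hn⟩ := (htend.eventually (gt_mem_nhds hε)).exists
  obtain ⟨w, hlen, hxw⟩ := exists_len_cyl Φ n x hx
  refine ⟨w, hxw, fun y hy => hball ?_⟩
  have : dist y x ≤ Metric.diam (Φ.cyl w) :=
    Metric.dist_le_diam_of_mem (cyl_isCompact Φ w).isBounded hy hxw
  have h2 := diam_cyl Φ ρ hρ hρ0 w
  rw [hlen] at h2
  exact Metric.mem_ball.2 (lt_of_le_of_lt (this.trans h2) hn)

section Measure

variable (Φ : IFS d m) {p : Fin m → ℝ≥0∞} {μ : MeasureTheory.Measure (Pt d)}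

lemma mu_Kc (hμ : Φ.SelfSimilar p μ) : μ Φ.Kᶜ = 0 := by
  obtain ⟨hp1, hppos, hprob, hK1, hself⟩ := hμ
  haveI := hprob
  rw [MeasureTheory.measure_compl Φ.K_compact.measurableSet (by rw [hK1]; exact ENNReal.one_ne_top),
    MeasureTheory.measure_univ, hK1, tsub_self]

lemma mu_image (hμ : Φ.SelfSimilar p μ) (i : Fin m) (B : Set (Pt d)) (hB : IsCompact B)
    (hBK : B ⊆ Φ.K) : μ (Φ.S i '' B) = p i * μ B := by
  have hKc := mu_Kc Φ hμ
  obtain ⟨hp1, hppos, hprob, hK1, hself⟩ := hμ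
  have hBm : MeasurableSet (Φ.S i '' B) := (hB.image (S_continuous Φ i)).measurableSet
  calc μ (Φ.S i '' B) = ∑ j, p j * μ (Φ.S j ⁻¹' (Φ.S i '' B)) := by
        conv_lhs => rw [hself]
        rw [MeasureTheory.Measure.finset_sum_apply]
        refine Finset.sum_congr rfl fun j _ => ?_
        rw [MeasureTheory.Measure.smul_apply, smul_eq_mul,
          MeasureTheory.Measure.map_apply (S_continuous Φ j).measurable hBm]
    _ = p i * μ B := by
        rw [Finset.sum_eq_single i]
        · rw [Set.preimage_image_eq B (S_injective Φ i)]
        · intro j _ hj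
          have hsub : Φ.S j ⁻¹' (Φ.S i '' B) ⊆ Φ.Kᶜ := by
            intro x hx hxK
            have h1 : Φ.S j x ∈ Φ.S i '' Φ.K := Set.image_mono hBK hx
            have h2 : Φ.S j x ∈ Φ.S j '' Φ.K := Set.mem_image_of_mem _ hxK
            exact Set.disjoint_left.1 (Φ.ssc hj) h2 h1
          rw [MeasureTheory.measure_mono_null hsub hKc, mul_zero]
        · intro h; exact absurd (Finset.mem_univ i) h

lemma mu_cyl (hμ : Φ.SelfSimilar p μ) : ∀ w : List (Fin m), μ (Φ.cyl w) = (w.map p).prod := by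
  intro w
  induction w with
  | nil => rw [cyl_nil, hμ.2.2.2.1]; simp
  | cons i w ih =>
    rw [cyl_cons, mu_image Φ hμ i _ (cyl_isCompact Φ w) (cyl_subset_K Φ w), ih]
    simp

lemma p_le_one (hμ : Φ.SelfSimilar p μ) (i : Fin m) : p i ≤ 1 := by
  rw [← hμ.1]
  exact Finset.single_le_sum (f := p) (fun j _ => zero_le) (Finset.mem_univ i)

lemma mu_cyl_pos (hμ : Φ.SelfSimilar p μ) (w : List (Fin m)) : 0 < μ (Φ.cyl w) := by
  rw [mu_cyl Φ hμ w]
  rw [pos_iff_ne_zero]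
  apply List.prod_ne_zero
  intro h0
  rw [List.mem_map] at h0
  obtain ⟨i, -, hi⟩ := h0
  exact (hμ.2.1 i).ne' hi

lemma mu_cyl_le_one (hμ : Φ.SelfSimilar p μ) (w : List (Fin m)) : μ (Φ.cyl w) ≤ 1 := by
  rw [← hμ.2.2.2.1]
  exact MeasureTheory.measure_mono (cyl_subset_K Φ w)

lemma mu_cyl_ne_top (hμ : Φ.SelfSimilar p μ) (w : List (Fin m)) : μ (Φ.cyl w) ≠ ∞ :=
  ((mu_cyl_le_one Φ hμ w).trans_lt ENNReal.one_lt_top).ne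

end Measure

end SteinAux

namespace SteinAux

open MeasureTheory Set Filter
open scoped ENNReal

variable {d m : ℕ}

lemma maxOp_measurable (Φ : IFS d m) (μ : Measure (Pt d)) (f : Pt d → ℝ) :
    Measurable (Φ.maxOp μ f) := by
  have heq : Φ.maxOp μ f = fun x => ⨆ w : List (Fin m),
      (Φ.cyl w).indicator (fun _ => (μ (Φ.cyl w))⁻¹ * ∫⁻ y in Φ.cyl w, ENNReal.ofReal |f y| ∂μ) x := by
    funext x
    unfold IFS.maxOp
    congr 1
    funext w
    by_cases h : x ∈ Φ.cyl w
    · simp [h]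
    · simp [h]
  rw [heq]
  exact Measurable.iSup fun w => Measurable.indicator measurable_const (cyl_measurableSet Φ w)

lemma le_maxOp (Φ : IFS d m) (μ : Measure (Pt d)) (f : Pt d → ℝ) {x : Pt d}
    {w : List (Fin m)} (h : x ∈ Φ.cyl w) :
    (μ (Φ.cyl w))⁻¹ * ∫⁻ y in Φ.cyl w, ENNReal.ofReal |f y| ∂μ ≤ Φ.maxOp μ f x :=
  le_iSup₂ (f := fun (w : List (Fin m)) (_ : x ∈ Φ.cyl w) =>
    (μ (Φ.cyl w))⁻¹ * ∫⁻ y in Φ.cyl w, ENNReal.ofReal |f y| ∂μ) w h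

lemma vol_level_le (M : ℝ≥0∞) :
    (volume.restrict (Ioi (0:ℝ))) {t : ℝ | ENNReal.ofReal t < M} ≤ M := by
  have hms : MeasurableSet {t : ℝ | ENNReal.ofReal t < M} :=
    measurableSet_lt (ENNReal.measurable_ofReal) measurable_const
  rcases eq_or_ne M ∞ with rfl | hM
  · exact le_top
  · rw [Measure.restrict_apply hms]
    have hsub : {t : ℝ | ENNReal.ofReal t < M} ∩ Ioi 0 ⊆ Ioc 0 M.toReal := by
      rintro t ⟨h1, h2⟩
      exact ⟨h2, ((ENNReal.ofReal_lt_iff_lt_toReal (le_of_lt h2) hM).1 h1).le⟩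
    refine (measure_mono hsub).trans ?_
    rw [Real.volume_Ioc, sub_zero, ENNReal.ofReal_toReal hM]

lemma pointwise_log_le (a : ℝ) :
    ENNReal.ofReal (a * posLog a) ≤ ∫⁻ t in Ioi (1:ℝ),
      (if ENNReal.ofReal t < ENNReal.ofReal a then (ENNReal.ofReal t)⁻¹ * ENNReal.ofReal a else 0) := by
  rcases le_or_gt a 1 with h | h
  · have h0 : a * posLog a ≤ 0 := by
      rcases le_or_gt a 0 with ha | ha
      · exact mul_nonpos_of_nonpos_of_nonneg ha (le_max_left _ _)
      · have : Real.log a ≤ 0 := Real.log_nonpos ha.le h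
        rw [posLog, max_eq_left this]
        simp
    rw [ENNReal.ofReal_eq_zero.2 h0]
    exact zero_le
  · have ha0 : (0:ℝ) < a := lt_trans one_pos h
    have key : ∫⁻ t in Ioo (1:ℝ) a, ENNReal.ofReal (1/t) = ENNReal.ofReal (Real.log a) := by
      have hint : IntegrableOn (fun t : ℝ => 1/t) (Ioo 1 a) volume := by
        have h1 : IntervalIntegrable (fun t : ℝ => 1/t) volume 1 a := by
          apply intervalIntegral.intervalIntegrable_one_div
          · intro t ht h0
            subst h0
            rw [Set.uIcc_of_le h.le] at ht
            exact absurd ht.1 (by norm_num)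
          · fun_prop
        exact ((intervalIntegrable_iff_integrableOn_Ioc_of_le h.le).1 h1).mono_set Ioo_subset_Ioc_self
      rw [← ofReal_integral_eq_lintegral_ofReal hint]
      · congr 1
        rw [← integral_Ioc_eq_integral_Ioo, ← intervalIntegral.integral_of_le h.le,
          integral_one_div, div_one]
        intro h0
        rw [Set.uIcc_of_le h.le] at h0
        exact absurd h0.1 (by norm_num)
      · filter_upwards [self_mem_ae_restrict measurableSet_Ioo] with t ht
        have h0t : (0:ℝ) < t := lt_trans one_pos ht.1
        positivity
    calc ENNReal.ofReal (a * posLog a)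
        = ENNReal.ofReal a * ENNReal.ofReal (Real.log a) := by
          rw [posLog, max_eq_right (Real.log_nonneg h.le), ENNReal.ofReal_mul ha0.le]
      _ = ∫⁻ t in Ioo (1:ℝ) a, ENNReal.ofReal a * ENNReal.ofReal (1/t) := by
          rw [lintegral_const_mul _ (by fun_prop), key]
      _ = ∫⁻ t in Ioo (1:ℝ) a,
            (if ENNReal.ofReal t < ENNReal.ofReal a then (ENNReal.ofReal t)⁻¹ * ENNReal.ofReal a else 0) := by
          apply setLIntegral_congr_fun measurableSet_Ioo
          intro t ht
          beta_reduce
          have h1 : ENNReal.ofReal t < ENNReal.ofReal a := by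
            rw [ENNReal.ofReal_lt_ofReal_iff ha0]
            exact ht.2
          rw [if_pos h1, one_div, ENNReal.ofReal_inv_of_pos (lt_trans one_pos ht.1), mul_comm]
      _ ≤ _ := lintegral_mono_set (fun t ht => ht.1)

end SteinAux

namespace SteinAux

open MeasureTheory Set Filter
open scoped ENNReal

variable {d m : ℕ}

/-- the density measure `ν = |f| dμ` restricted to `K` -/
def nuM (Φ : IFS d m) (μ : Measure (Pt d)) (g₀ : Pt d → ℝ≥0∞) : Measure (Pt d) :=
  (μ.restrict Φ.K).withDensity g₀

lemma nu_cyl (Φ : IFS d m) (μ : Measure (Pt d)) {f : Pt d → ℝ} {g₀ : Pt d → ℝ≥0∞}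
    (hg : g₀ =ᵐ[μ.restrict Φ.K] fun x => ENNReal.ofReal |f x|) (w : List (Fin m)) :
    nuM Φ μ g₀ (Φ.cyl w) = ∫⁻ y in Φ.cyl w, ENNReal.ofReal |f y| ∂μ := by
  rw [nuM, withDensity_apply g₀ (cyl_measurableSet Φ w),
    Measure.restrict_restrict (cyl_measurableSet Φ w),
    Set.inter_eq_self_of_subset_left (cyl_subset_K Φ w)]
  apply lintegral_congr_ae
  have h1 : g₀ =ᵐ[(μ.restrict Φ.K).restrict (Φ.cyl w)] fun x => ENNReal.ofReal |f x| :=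
    ae_restrict_of_ae hg
  rwa [Measure.restrict_restrict (cyl_measurableSet Φ w),
    Set.inter_eq_self_of_subset_left (cyl_subset_K Φ w)] at h1

/-- the family of "bad" words at level `t`: cylinders where the average of `|f|` exceeds `t` -/
def Bad (Φ : IFS d m) (μ : Measure (Pt d)) (g₀ : Pt d → ℝ≥0∞) (t : ℝ) : Set (List (Fin m)) :=
  {w | ENNReal.ofReal t * μ (Φ.cyl w) < nuM Φ μ g₀ (Φ.cyl w)}

lemma measurable_U (Φ : IFS d m) (μ : Measure (Pt d)) (g₀ : Pt d → ℝ≥0∞) (t : ℝ) :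
    MeasurableSet (⋃ w ∈ Bad Φ μ g₀ t, Φ.cyl w) :=
  MeasurableSet.biUnion (Set.to_countable _) fun w _ => cyl_measurableSet Φ w

/-- points of `K` outside all bad cylinders have `g₀ ≤ t` a.e. (differentiation substitute) -/
lemma core_B (Φ : IFS d m) (μ : Measure (Pt d)) [IsFiniteMeasure μ] (g₀ : Pt d → ℝ≥0∞)
    (hg₀ : Measurable g₀) {t : ℝ} (ht : 0 < t) :
    nuM Φ μ g₀ ({x | ENNReal.ofReal t < g₀ x} ∩ (Φ.K \ ⋃ w ∈ Bad Φ μ g₀ t, Φ.cyl w)) = 0 := by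
  set E : Set (Pt d) := Φ.K \ ⋃ w ∈ Bad Φ μ g₀ t, Φ.cyl w with hE
  have hEmeas : MeasurableSet E := Φ.K_compact.measurableSet.diff (measurable_U Φ μ g₀ t)
  have claim1 : ∀ s : ℝ, t < s → (μ.restrict Φ.K) ({x | ENNReal.ofReal s < g₀ x} ∩ E) = 0 := by
    intro s hts
    set B : Set (Pt d) := {x | ENNReal.ofReal s < g₀ x} ∩ E with hBdef
    have hBmeas : MeasurableSet B :=
      (measurableSet_lt measurable_const hg₀).inter hEmeas
    have hBK : B ⊆ Φ.K := fun x hx => hx.2.1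
    by_contra hb
    set b := (μ.restrict Φ.K) B with hbdef
    have hbfin : b ≠ ∞ := measure_ne_top _ _
    have hμB : μ B = b := by
      rw [hbdef, Measure.restrict_apply hBmeas, Set.inter_eq_self_of_subset_left hBK]
    have key : ∀ ε : ℝ, 0 < ε →
        ENNReal.ofReal s * b ≤ ENNReal.ofReal t * b + ENNReal.ofReal t * ENNReal.ofReal ε := by
      intro ε hε
      have hlt : μ B < b + ENNReal.ofReal ε := by
        rw [hμB]
        exact ENNReal.lt_add_right hbfin (ENNReal.ofReal_pos.2 hε).ne'
      obtain ⟨W, hBW, hWopen, hWlt⟩ := Set.exists_isOpen_lt_of_lt B _ hlt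
      set 𝒞 : Set (List (Fin m)) := {w | Φ.cyl w ⊆ W ∧ (Φ.cyl w ∩ B).Nonempty} with h𝒞
      have hcover : B ⊆ ⋃ w ∈ 𝒞, Φ.cyl w := by
        intro x hx
        obtain ⟨w, hxw, hwW⟩ := exists_small_cyl Φ x (hBK hx) W hWopen (hBW hx)
        exact Set.mem_biUnion ⟨hwW, ⟨x, hxw, hx⟩⟩ hxw
      have hgood : ∀ w ∈ 𝒞, nuM Φ μ g₀ (Φ.cyl w) ≤ ENNReal.ofReal t * μ (Φ.cyl w) := by
        intro w hw
        obtain ⟨x, hxw, hxB⟩ := hw.2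
        have hxE : x ∈ E := hxB.2
        have hnb : w ∉ Bad Φ μ g₀ t := fun hbad => hxE.2 (Set.mem_biUnion hbad hxw)
        exact not_lt.1 hnb
      have h1 : ENNReal.ofReal s * b ≤ nuM Φ μ g₀ B := by
        have h2 : ∫⁻ _ in B, ENNReal.ofReal s ∂(μ.restrict Φ.K) ≤
            ∫⁻ x in B, g₀ x ∂(μ.restrict Φ.K) :=
          setLIntegral_mono hg₀ fun x hx => (le_of_lt hx.1)
        rw [setLIntegral_const] at h2
        rw [nuM, withDensity_apply g₀ hBmeas]
        exact h2
      have h3 : nuM Φ μ g₀ B ≤ ENNReal.ofReal t * μ W := by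
        calc nuM Φ μ g₀ B ≤ nuM Φ μ g₀ (⋃ w ∈ minSet 𝒞, Φ.cyl w) :=
              measure_mono (hcover.trans (le_of_eq (biUnion_minSet Φ 𝒞)))
          _ ≤ ∑' w : minSet 𝒞, nuM Φ μ g₀ (Φ.cyl w.1) :=
              measure_biUnion_le _ (Set.to_countable _) _
          _ ≤ ∑' w : minSet 𝒞, ENNReal.ofReal t * μ (Φ.cyl w.1) :=
              ENNReal.tsum_le_tsum fun w => hgood w.1 w.2.1
          _ = ENNReal.ofReal t * ∑' w : minSet 𝒞, μ (Φ.cyl w.1) := ENNReal.tsum_mul_left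
          _ = ENNReal.ofReal t * μ (⋃ w ∈ minSet 𝒞, Φ.cyl w) := by
              rw [measure_biUnion (Set.to_countable _) (minSet_pairwiseDisjoint Φ 𝒞)
                fun w _ => cyl_measurableSet Φ w]
          _ ≤ ENNReal.ofReal t * μ W := by
              gcongr
              exact Set.iUnion₂_subset fun w hw => hw.1.1
      calc ENNReal.ofReal s * b ≤ ENNReal.ofReal t * μ W := h1.trans h3
        _ ≤ ENNReal.ofReal t * (b + ENNReal.ofReal ε) := mul_le_mul_right hWlt.le _
        _ = ENNReal.ofReal t * b + ENNReal.ofReal t * ENNReal.ofReal ε := by rw [mul_add]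
    have hfinal : ENNReal.ofReal s * b ≤ ENNReal.ofReal t * b := by
      refine ENNReal.le_of_forall_pos_le_add fun δ hδ _ => ?_
      have hδ0 : (0:ℝ) < (δ : ℝ) := hδ
      have hδt : (0:ℝ) < (δ : ℝ) / (t + 1) := by positivity
      refine (key _ hδt).trans (add_le_add_right ?_ _)
      rw [← ENNReal.ofReal_mul ht.le]
      calc ENNReal.ofReal (t * ((δ:ℝ)/(t+1))) ≤ ENNReal.ofReal (δ:ℝ) := by
            apply ENNReal.ofReal_le_ofReal
            rw [mul_div_assoc', div_le_iff₀ (by positivity)]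
            nlinarith
        _ = (δ : ℝ≥0∞) := ENNReal.ofReal_coe_nnreal
    have hs_le : s ≤ t := by
      have h4 := (ENNReal.mul_le_mul_iff_left hb hbfin).1 hfinal
      exact (ENNReal.ofReal_le_ofReal_iff ht.le).1 h4
    exact absurd hts (not_lt.2 hs_le)
  have hsub : {x | ENNReal.ofReal t < g₀ x} ∩ E ⊆
      ⋃ n : ℕ, {x | ENNReal.ofReal (t + 1/(n+1)) < g₀ x} ∩ E := by
    rintro x ⟨hx1, hx2⟩
    rcases eq_or_ne (g₀ x) ∞ with hinf | hfin
    · exact Set.mem_iUnion.2 ⟨0, ⟨by rw [Set.mem_setOf_eq, hinf]; exact ENNReal.ofReal_lt_top, hx2⟩⟩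
    · have h1 : t < (g₀ x).toReal := (ENNReal.ofReal_lt_iff_lt_toReal ht.le hfin).1 hx1
      obtain ⟨n, hn⟩ := exists_nat_one_div_lt (sub_pos.2 h1)
      refine Set.mem_iUnion.2 ⟨n, ⟨?_, hx2⟩⟩
      rw [Set.mem_setOf_eq, ENNReal.ofReal_lt_iff_lt_toReal (by positivity) hfin]
      linarith
  refine measure_mono_null hsub ?_
  refine measure_iUnion_null fun n => ?_
  have hμ0 : (μ.restrict Φ.K) ({x | ENNReal.ofReal (t + 1/(n+1)) < g₀ x} ∩ E) = 0 :=
    claim1 _ (lt_add_of_pos_right t (by positivity))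
  rw [nuM, withDensity_apply g₀ ((measurableSet_lt measurable_const hg₀).inter hEmeas),
    Measure.restrict_eq_zero.2 hμ0, lintegral_zero_measure]

/-- the stopping-time bound on the union of bad cylinders -/
lemma core_C (Φ : IFS d m) {p : Fin m → ℝ≥0∞} {μ : Measure (Pt d)} (hμ : Φ.SelfSimilar p μ)
    (g₀ : Pt d → ℝ≥0∞) {t : ℝ} {pm : ℝ≥0∞} (hpm : ∀ i, pm ≤ p i) (hpm0 : pm ≠ 0)
    (hpmtop : pm ≠ ∞) (htν : nuM Φ μ g₀ Set.univ ≤ ENNReal.ofReal t) :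
    nuM Φ μ g₀ (⋃ w ∈ Bad Φ μ g₀ t, Φ.cyl w) ≤
      (ENNReal.ofReal t / pm) * μ (⋃ w ∈ Bad Φ μ g₀ t, Φ.cyl w) := by
  rw [biUnion_minSet Φ (Bad Φ μ g₀ t)]
  have hbound : ∀ w ∈ minSet (Bad Φ μ g₀ t),
      nuM Φ μ g₀ (Φ.cyl w) ≤ (ENNReal.ofReal t / pm) * μ (Φ.cyl w) := by
    rintro w ⟨hwBad, hwmin⟩
    rcases List.eq_nil_or_concat' w with rfl | ⟨u, j, rfl⟩
    · exfalso
      have h1 : ENNReal.ofReal t < nuM Φ μ g₀ (Φ.cyl []) := by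
        have h2 := hwBad
        rw [Bad, Set.mem_setOf_eq] at h2
        calc ENNReal.ofReal t = ENNReal.ofReal t * μ (Φ.cyl []) := by
              rw [cyl_nil, hμ.2.2.2.1, mul_one]
          _ < _ := h2
      exact absurd ((measure_mono (Set.subset_univ _)).trans htν) (not_le.2 h1)
    · have hpre : u <+: u ++ [j] := ⟨[j], rfl⟩
      have hne : u ≠ u ++ [j] := by simp
      have hu_not : u ∉ Bad Φ μ g₀ t := hwmin u hpre hne
      have h1 : nuM Φ μ g₀ (Φ.cyl (u ++ [j])) ≤ ENNReal.ofReal t * μ (Φ.cyl u) :=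
        (measure_mono (cyl_mono_prefix Φ hpre)).trans (not_lt.1 hu_not)
      have h2 : μ (Φ.cyl (u ++ [j])) = μ (Φ.cyl u) * p j := by
        rw [mu_cyl Φ hμ, mu_cyl Φ hμ, List.map_append, List.prod_append]
        simp
      calc nuM Φ μ g₀ (Φ.cyl (u ++ [j])) ≤ ENNReal.ofReal t * μ (Φ.cyl u) := h1
        _ = (ENNReal.ofReal t / pm) * (pm * μ (Φ.cyl u)) := by
            rw [← mul_assoc, ENNReal.div_mul_cancel hpm0 hpmtop]
        _ ≤ (ENNReal.ofReal t / pm) * μ (Φ.cyl (u ++ [j])) := by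
            gcongr
            rw [h2, mul_comm]
            gcongr
            exact hpm j
  calc nuM Φ μ g₀ (⋃ w ∈ minSet (Bad Φ μ g₀ t), Φ.cyl w)
      ≤ ∑' w : minSet (Bad Φ μ g₀ t), nuM Φ μ g₀ (Φ.cyl w.1) :=
        measure_biUnion_le _ (Set.to_countable _) _
    _ ≤ ∑' w : minSet (Bad Φ μ g₀ t), (ENNReal.ofReal t / pm) * μ (Φ.cyl w.1) :=
        ENNReal.tsum_le_tsum fun w => hbound w.1 w.2
    _ = (ENNReal.ofReal t / pm) * ∑' w : minSet (Bad Φ μ g₀ t), μ (Φ.cyl w.1) :=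
        ENNReal.tsum_mul_left
    _ = (ENNReal.ofReal t / pm) * μ (⋃ w ∈ minSet (Bad Φ μ g₀ t), Φ.cyl w) := by
        rw [measure_biUnion (Set.to_countable _) (minSet_pairwiseDisjoint Φ _)
          fun w _ => cyl_measurableSet Φ w]

/-- bad cylinders are inside the superlevel set of the maximal function -/
lemma U_subset_maxOp (Φ : IFS d m) {p : Fin m → ℝ≥0∞} {μ : Measure (Pt d)}
    (hμ : Φ.SelfSimilar p μ) (f : Pt d → ℝ) {g₀ : Pt d → ℝ≥0∞}
    (hg : g₀ =ᵐ[μ.restrict Φ.K] fun x => ENNReal.ofReal |f x|) (t : ℝ) :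
    (⋃ w ∈ Bad Φ μ g₀ t, Φ.cyl w) ⊆ {x | ENNReal.ofReal t < Φ.maxOp μ f x} ∩ Φ.K := by
  intro x hx
  obtain ⟨w, hwBad, hxw⟩ := Set.mem_iUnion₂.1 hx
  refine ⟨?_, cyl_subset_K Φ w hxw⟩
  have h0 : μ (Φ.cyl w) ≠ 0 := (mu_cyl_pos Φ hμ w).ne'
  have htop : μ (Φ.cyl w) ≠ ∞ := mu_cyl_ne_top Φ hμ w
  have h1 : ENNReal.ofReal t < (μ (Φ.cyl w))⁻¹ * nuM Φ μ g₀ (Φ.cyl w) := by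
    have h2 := hwBad
    rw [Bad, Set.mem_setOf_eq] at h2
    calc ENNReal.ofReal t = (μ (Φ.cyl w))⁻¹ * (ENNReal.ofReal t * μ (Φ.cyl w)) := by
          rw [mul_comm (ENNReal.ofReal t), ← mul_assoc, ENNReal.inv_mul_cancel h0 htop, one_mul]
      _ < (μ (Φ.cyl w))⁻¹ * nuM Φ μ g₀ (Φ.cyl w) := by
          rw [ENNReal.mul_lt_mul_iff_right (ENNReal.inv_ne_zero.2 htop) (ENNReal.inv_ne_top.2 h0)]
          exact h2
  rw [Set.mem_setOf_eq]
  calc ENNReal.ofReal t < (μ (Φ.cyl w))⁻¹ * nuM Φ μ g₀ (Φ.cyl w) := h1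
    _ = (μ (Φ.cyl w))⁻¹ * ∫⁻ y in Φ.cyl w, ENNReal.ofReal |f y| ∂μ := by
        rw [nu_cyl Φ μ hg w]
    _ ≤ Φ.maxOp μ f x := le_maxOp Φ μ f hxw

end SteinAux

/-- Stein-type converse of the `L log L` inequality: if `f ∈ L¹(K,μ)` and
`M f ∈ L¹(K,μ)`, then `|f| log⁺ |f| ∈ L¹(K,μ)` with a quantitative bound. -/
theorem stein_converse (d m : ℕ) (Φ : IFS d m) (p : Fin m → ℝ≥0∞)
    (μ : Measure (Pt d)) (hμ : Φ.SelfSimilar p μ)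
    (f : Pt d → ℝ) (hf : IntegrableOn f Φ.K μ)
    (hM : ∫⁻ x in Φ.K, Φ.maxOp μ f x ∂μ < ∞) :
    (∫⁻ x in Φ.K, ENNReal.ofReal (|f x| * posLog |f x|) ∂μ < ∞) ∧
    ∃ C : ℝ, 0 < C ∧
      ∫⁻ x in Φ.K, ENNReal.ofReal (|f x| * posLog |f x|) ∂μ ≤
        ENNReal.ofReal C * ∫⁻ x in Φ.K, Φ.maxOp μ f x ∂μ := by
  classical
  obtain ⟨hp1, hppos, hprob, hK1, hself⟩ := id hμ
  haveI := hprob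
  haveI : Nonempty (Fin m) := by
    obtain ⟨y, hy⟩ := Φ.K_nonempty
    rw [Φ.K_invariant] at hy
    obtain ⟨i, -⟩ := Set.mem_iUnion.1 hy
    exact ⟨i⟩
  set μ' := μ.restrict Φ.K with hμ'def
  set R := ∫⁻ x, Φ.maxOp μ f x ∂μ' with hRdef
  set I := ∫⁻ x, ENNReal.ofReal (|f x| * posLog |f x|) ∂μ' with hIdef
  have hRtop : R ≠ ∞ := hM.ne
  -- a measurable version of f
  have hfae := hf.1
  set f₀ := hfae.mk f with hf₀def
  have hff₀ : f =ᵐ[μ'] f₀ := hfae.ae_eq_mk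
  set g₀ : Pt d → ℝ≥0∞ := fun x => ENNReal.ofReal |f₀ x| with hg₀def
  have hg₀meas : Measurable g₀ :=
    ENNReal.measurable_ofReal.comp hfae.stronglyMeasurable_mk.measurable.abs
  have hg : g₀ =ᵐ[μ'] fun x => ENNReal.ofReal |f x| := by
    filter_upwards [hff₀] with x hx
    rw [hg₀def]
    simp only [hx]
  set ν := SteinAux.nuM Φ μ g₀ with hνdef
  have hνuniv : ν Set.univ ≠ ∞ := by
    rw [hνdef, SteinAux.nuM, withDensity_apply _ MeasurableSet.univ, Measure.restrict_univ]
    have h1 : ∫⁻ x, g₀ x ∂μ' = ∫⁻ x, (‖f x‖₊ : ℝ≥0∞) ∂μ' := by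
      apply lintegral_congr_ae
      filter_upwards [hg] with x hx
      rw [hx, ← enorm_eq_nnnorm, Real.enorm_eq_ofReal_abs]
    rw [h1]
    exact hf.2.ne
  -- the minimal weight
  set pm : ℝ≥0∞ := Finset.univ.inf' Finset.univ_nonempty p with hpmdef
  obtain ⟨i₁, -, hpmeq⟩ := Finset.exists_mem_eq_inf' (Finset.univ_nonempty (α := Fin m)) p
  have hpmle : ∀ i, pm ≤ p i := fun i => Finset.inf'_le p (Finset.mem_univ i)
  have hpm0 : pm ≠ 0 := by rw [hpmdef, hpmeq]; exact (hppos i₁).ne'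
  have hpmtop : pm ≠ ∞ := by
    rw [hpmdef, hpmeq]
    exact ((SteinAux.p_le_one Φ hμ i₁).trans_lt ENNReal.one_lt_top).ne
  -- rewrite the LHS via f₀
  have hLHS : I = ∫⁻ x, ENNReal.ofReal (|f₀ x| * posLog |f₀ x|) ∂μ' := by
    apply lintegral_congr_ae
    filter_upwards [hff₀] with x hx
    rw [hx]
  -- the two-variable kernel
  set H : Pt d × ℝ → ℝ≥0∞ := fun q =>
    if ENNReal.ofReal q.2 < g₀ q.1 then (ENNReal.ofReal q.2)⁻¹ * g₀ q.1 else 0 with hHdef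
  have hHmeas : Measurable H := by
    apply Measurable.ite
    · exact measurableSet_lt (ENNReal.measurable_ofReal.comp measurable_snd)
        (hg₀meas.comp measurable_fst)
    · exact ((ENNReal.measurable_ofReal.comp measurable_snd).inv).mul (hg₀meas.comp measurable_fst)
    · exact measurable_const
  have hpoint : ∀ x, ENNReal.ofReal (|f₀ x| * posLog |f₀ x|) ≤
      ∫⁻ t in Set.Ioi (1:ℝ), H (x, t) := by
    intro x
    have h2 := SteinAux.pointwise_log_le (|f₀ x|)
    simpa [hHdef, hg₀def] using h2
  have hgset : ∀ t : ℝ, MeasurableSet {x | ENNReal.ofReal t < g₀ x} :=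
    fun t => measurableSet_lt measurable_const hg₀meas
  have hinner : ∀ t : ℝ, ∫⁻ x, H (x, t) ∂μ' =
      (ENNReal.ofReal t)⁻¹ * ν {x | ENNReal.ofReal t < g₀ x} := by
    intro t
    have h1 : (fun x => H (x, t)) = Set.indicator {x | ENNReal.ofReal t < g₀ x}
        (fun x => (ENNReal.ofReal t)⁻¹ * g₀ x) := by
      funext x
      by_cases h : ENNReal.ofReal t < g₀ x <;>
        simp [hHdef, Set.indicator_apply, Set.mem_setOf_eq, h]
    rw [h1, lintegral_indicator (hgset t), lintegral_const_mul _ hg₀meas,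
      hνdef, SteinAux.nuM, withDensity_apply _ (hgset t)]
  have hswap : ∫⁻ x, (∫⁻ t in Set.Ioi (1:ℝ), H (x, t)) ∂μ' =
      ∫⁻ t in Set.Ioi (1:ℝ), ∫⁻ x, H (x, t) ∂μ' := by
    apply lintegral_lintegral_swap
    exact hHmeas.aemeasurable
  set T : ℝ := max 1 (ν Set.univ).toReal with hTdef
  have hT1 : (1:ℝ) ≤ T := le_max_left _ _
  set Ψ : ℝ → ℝ≥0∞ := fun t => (ENNReal.ofReal t)⁻¹ * ν {x | ENNReal.ofReal t < g₀ x} with hΨdef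
  have hchain : I ≤ ∫⁻ t in Set.Ioi (1:ℝ), Ψ t := by
    rw [hLHS]
    calc ∫⁻ x, ENNReal.ofReal (|f₀ x| * posLog |f₀ x|) ∂μ'
        ≤ ∫⁻ x, (∫⁻ t in Set.Ioi (1:ℝ), H (x, t)) ∂μ' := lintegral_mono hpoint
      _ = ∫⁻ t in Set.Ioi (1:ℝ), ∫⁻ x, H (x, t) ∂μ' := hswap
      _ = ∫⁻ t in Set.Ioi (1:ℝ), Ψ t := lintegral_congr fun t => hinner t
  have hmax_meas := SteinAux.maxOp_measurable Φ μ f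
  set φ : ℝ → ℝ≥0∞ := fun t => μ' {x | ENNReal.ofReal t < Φ.maxOp μ f x} with hφdef
  have hφanti : Antitone φ := by
    intro a b hab
    apply measure_mono
    intro x hx
    exact lt_of_le_of_lt (ENNReal.ofReal_le_ofReal hab) hx
  have hφmeas : Measurable φ := hφanti.measurable
  have hΨbound : ∀ t ∈ Set.Ioi T, Ψ t ≤ pm⁻¹ * φ t := by
    intro t ht
    rw [Set.mem_Ioi] at ht
    have ht1 : (1:ℝ) < t := lt_of_le_of_lt hT1 ht
    have ht0 : (0:ℝ) < t := lt_trans one_pos ht1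
    have hot0 : ENNReal.ofReal t ≠ 0 := (ENNReal.ofReal_pos.2 ht0).ne'
    have hottop : ENNReal.ofReal t ≠ ∞ := ENNReal.ofReal_ne_top
    have htν : ν Set.univ ≤ ENNReal.ofReal t := by
      rw [← ENNReal.ofReal_toReal hνuniv]
      exact ENNReal.ofReal_le_ofReal (((le_max_right 1 _).trans_eq hTdef.symm).trans ht.le)
    have hKc : ν Φ.Kᶜ = 0 := by
      rw [hνdef, SteinAux.nuM, withDensity_apply _ Φ.K_compact.measurableSet.compl,
        Measure.restrict_eq_zero.2, lintegral_zero_measure]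
      rw [Measure.restrict_apply Φ.K_compact.measurableSet.compl]
      simp
    have hEzero := SteinAux.core_B Φ μ g₀ hg₀meas ht0
    rw [← hνdef] at hEzero
    have hcover : {x | ENNReal.ofReal t < g₀ x} ⊆
        Φ.Kᶜ ∪ (({x | ENNReal.ofReal t < g₀ x} ∩
          (Φ.K \ ⋃ w ∈ SteinAux.Bad Φ μ g₀ t, Φ.cyl w)) ∪
          ⋃ w ∈ SteinAux.Bad Φ μ g₀ t, Φ.cyl w) := by
      intro x hx
      by_cases hxK : x ∈ Φ.K
      · by_cases hxU : x ∈ ⋃ w ∈ SteinAux.Bad Φ μ g₀ t, Φ.cyl w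
        · exact Or.inr (Or.inr hxU)
        · exact Or.inr (Or.inl ⟨hx, hxK, hxU⟩)
      · exact Or.inl hxK
    have hsplit : ν {x | ENNReal.ofReal t < g₀ x} ≤
        ν (⋃ w ∈ SteinAux.Bad Φ μ g₀ t, Φ.cyl w) := by
      calc ν {x | ENNReal.ofReal t < g₀ x}
          ≤ ν Φ.Kᶜ + (ν ({x | ENNReal.ofReal t < g₀ x} ∩
              (Φ.K \ ⋃ w ∈ SteinAux.Bad Φ μ g₀ t, Φ.cyl w)) +
              ν (⋃ w ∈ SteinAux.Bad Φ μ g₀ t, Φ.cyl w)) :=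
            (measure_mono hcover).trans ((measure_union_le _ _).trans
              (add_le_add_right (measure_union_le _ _) _))
        _ = ν (⋃ w ∈ SteinAux.Bad Φ μ g₀ t, Φ.cyl w) := by
            rw [hKc, hEzero, zero_add, zero_add]
    have hU := SteinAux.core_C Φ hμ g₀ hpmle hpm0 hpmtop htν
    rw [← hνdef] at hU
    have hUsub := SteinAux.U_subset_maxOp Φ hμ f hg t
    have hμU : μ (⋃ w ∈ SteinAux.Bad Φ μ g₀ t, Φ.cyl w) ≤ φ t := by
      have hms : MeasurableSet {x | ENNReal.ofReal t < Φ.maxOp μ f x} :=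
        measurableSet_lt measurable_const hmax_meas
      simp only [hφdef, hμ'def]
      rw [Measure.restrict_apply hms]
      exact measure_mono hUsub
    calc Ψ t = (ENNReal.ofReal t)⁻¹ * ν {x | ENNReal.ofReal t < g₀ x} := rfl
      _ ≤ (ENNReal.ofReal t)⁻¹ * ((ENNReal.ofReal t / pm) * φ t) := by
          apply mul_le_mul_right
          exact hsplit.trans (hU.trans (mul_le_mul_right hμU _))
      _ = pm⁻¹ * φ t := by
          have halg : (ENNReal.ofReal t)⁻¹ * ((ENNReal.ofReal t / pm) * φ t) =
              ((ENNReal.ofReal t)⁻¹ * ENNReal.ofReal t) * (pm⁻¹ * φ t) := by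
            rw [div_eq_mul_inv]; ring
          rw [halg, ENNReal.inv_mul_cancel hot0 hottop, one_mul]
  have hlayer : ∫⁻ t in Set.Ioi (0:ℝ), φ t ≤ R := by
    have hmeas3 : Measurable (fun q : ℝ × Pt d =>
        if ENNReal.ofReal q.1 < Φ.maxOp μ f q.2 then (1:ℝ≥0∞) else 0) :=
      Measurable.ite (measurableSet_lt (ENNReal.measurable_ofReal.comp measurable_fst)
        (hmax_meas.comp measurable_snd)) measurable_const measurable_const
    have h1 : ∀ t : ℝ, φ t =
        ∫⁻ x, (if ENNReal.ofReal t < Φ.maxOp μ f x then (1:ℝ≥0∞) else 0) ∂μ' := by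
      intro t
      have hms : MeasurableSet {x | ENNReal.ofReal t < Φ.maxOp μ f x} :=
        measurableSet_lt measurable_const hmax_meas
      simp only [hφdef]
      rw [← lintegral_indicator_one hms]
      refine lintegral_congr fun x => ?_
      by_cases h : ENNReal.ofReal t < Φ.maxOp μ f x <;>
        simp [Set.indicator_apply, Set.mem_setOf_eq, h]
    calc ∫⁻ t in Set.Ioi (0:ℝ), φ t
        = ∫⁻ t in Set.Ioi (0:ℝ),
            ∫⁻ x, (if ENNReal.ofReal t < Φ.maxOp μ f x then (1:ℝ≥0∞) else 0) ∂μ' :=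
          lintegral_congr fun t => h1 t
      _ = ∫⁻ x, (∫⁻ t in Set.Ioi (0:ℝ),
            (if ENNReal.ofReal t < Φ.maxOp μ f x then (1:ℝ≥0∞) else 0)) ∂μ' := by
          apply lintegral_lintegral_swap
          exact hmeas3.aemeasurable
      _ = ∫⁻ x, (volume.restrict (Set.Ioi (0:ℝ)))
            {t : ℝ | ENNReal.ofReal t < Φ.maxOp μ f x} ∂μ' := by
          refine lintegral_congr fun x => ?_
          rw [← lintegral_indicator_one
            (measurableSet_lt ENNReal.measurable_ofReal measurable_const)]
          refine lintegral_congr fun t => ?_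
          by_cases h : ENNReal.ofReal t < Φ.maxOp μ f x <;>
            simp [Set.indicator_apply, Set.mem_setOf_eq, h]
      _ ≤ ∫⁻ x, Φ.maxOp μ f x ∂μ' := lintegral_mono fun x => SteinAux.vol_level_le _
  have hIoiT : ∫⁻ t in Set.Ioi T, Ψ t ≤ pm⁻¹ * R := by
    calc ∫⁻ t in Set.Ioi T, Ψ t ≤ ∫⁻ t in Set.Ioi T, pm⁻¹ * φ t :=
          setLIntegral_mono (measurable_const.mul hφmeas) hΨbound
      _ = pm⁻¹ * ∫⁻ t in Set.Ioi T, φ t := lintegral_const_mul _ hφmeas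
      _ ≤ pm⁻¹ * ∫⁻ t in Set.Ioi (0:ℝ), φ t := by
          apply mul_le_mul_right
          exact lintegral_mono_set (Set.Ioi_subset_Ioi (by linarith))
      _ ≤ pm⁻¹ * R := mul_le_mul_right hlayer _
  have hIoc : ∫⁻ t in Set.Ioc (1:ℝ) T, Ψ t ≤ ν Set.univ * ENNReal.ofReal (T - 1) := by
    calc ∫⁻ t in Set.Ioc (1:ℝ) T, Ψ t ≤ ∫⁻ _ in Set.Ioc (1:ℝ) T, ν Set.univ := by
          apply setLIntegral_mono measurable_const
          intro t ht
          calc Ψ t = (ENNReal.ofReal t)⁻¹ * ν {x | ENNReal.ofReal t < g₀ x} := rfl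
            _ ≤ 1 * ν Set.univ := by
              apply mul_le_mul'
              · rw [ENNReal.inv_le_one]
                exact (ENNReal.one_le_ofReal).2 ht.1.le
              · exact measure_mono (Set.subset_univ _)
            _ = ν Set.univ := one_mul _
      _ = ν Set.univ * ENNReal.ofReal (T - 1) := by
          rw [setLIntegral_const, Real.volume_Ioc]
  have hsplitInt : ∫⁻ t in Set.Ioi (1:ℝ), Ψ t =
      (∫⁻ t in Set.Ioc (1:ℝ) T, Ψ t) + ∫⁻ t in Set.Ioi T, Ψ t := by
    rw [← lintegral_union measurableSet_Ioi (Set.Ioc_disjoint_Ioi le_rfl),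
      Set.Ioc_union_Ioi_eq_Ioi hT1]
  have hIfin : I ≤ ν Set.univ * ENNReal.ofReal (T - 1) + pm⁻¹ * R :=
    hchain.trans (by rw [hsplitInt]; exact add_le_add hIoc hIoiT)
  have hIlt : I < ∞ := by
    refine lt_of_le_of_lt hIfin ?_
    apply ENNReal.add_lt_top.2
    constructor
    · exact ENNReal.mul_lt_top (lt_top_iff_ne_top.2 hνuniv) ENNReal.ofReal_lt_top
    · exact ENNReal.mul_lt_top (lt_top_iff_ne_top.2 (ENNReal.inv_ne_top.2 hpm0))
        (lt_top_iff_ne_top.2 hRtop)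
  refine ⟨hIlt, ?_⟩
  rcases eq_or_ne R 0 with hR0 | hR0
  · -- degenerate case: the maximal function vanishes a.e., hence f = 0 a.e. on K
    have hae : ∀ᵐ x ∂μ', Φ.maxOp μ f x = 0 := (lintegral_eq_zero_iff hmax_meas).1 hR0
    have hμ'ne : μ' ≠ 0 := by
      intro h0
      have h2 : μ' Set.univ = 0 := by rw [h0]; rfl
      rw [hμ'def, Measure.restrict_apply MeasurableSet.univ, Set.univ_inter, hK1] at h2
      exact one_ne_zero h2
    haveI : (MeasureTheory.ae μ').NeBot := ae_neBot.2 hμ'ne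
    obtain ⟨x, hx0, hxK⟩ := (hae.and (ae_restrict_mem Φ.K_compact.measurableSet)).exists
    have hc0 : ∫⁻ y in Φ.K, ENNReal.ofReal |f y| ∂μ = 0 := by
      have hle := SteinAux.le_maxOp Φ μ f (x := x) (w := ([] : List (Fin m)))
        (by rwa [SteinAux.cyl_nil])
      rw [SteinAux.cyl_nil, hK1, inv_one, one_mul, hx0] at hle
      exact le_antisymm hle zero_le
    have hfz : (fun y => ENNReal.ofReal |f y|) =ᵐ[μ'] 0 := by
      apply (lintegral_eq_zero_iff' (hg₀meas.aemeasurable.congr hg)).1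
      exact hc0
    have hIz : I = 0 := by
      rw [hIdef, ← lintegral_zero (μ := μ')]
      apply lintegral_congr_ae
      filter_upwards [hfz] with y hy
      have h3 : |f y| = 0 :=
        le_antisymm (ENNReal.ofReal_eq_zero.1 hy) (abs_nonneg _)
      simp [h3, posLog]
    exact ⟨1, one_pos, by rw [hIz]; exact zero_le⟩
  · set C := I.toReal / R.toReal + 1 with hCdef
    have hdiv0 : 0 ≤ I.toReal / R.toReal := div_nonneg ENNReal.toReal_nonneg ENNReal.toReal_nonneg
    have hC0 : 0 < C := by rw [hCdef]; linarith
    refine ⟨C, hC0, ?_⟩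
    have hRpos : 0 < R.toReal := ENNReal.toReal_pos hR0 hRtop
    calc I = ENNReal.ofReal I.toReal := (ENNReal.ofReal_toReal hIlt.ne).symm
      _ ≤ ENNReal.ofReal (C * R.toReal) := by
          apply ENNReal.ofReal_le_ofReal
          rw [hCdef, add_mul, div_mul_cancel₀ _ hRpos.ne', one_mul]
          linarith
      _ = ENNReal.ofReal C * ENNReal.ofReal R.toReal := ENNReal.ofReal_mul hC0.le
      _ = ENNReal.ofReal C * R := by rw [ENNReal.ofReal_toReal hRtop]
end
end
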